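/- arXiv:0710.0708 — 9 statements merged into one kernel-verified Lean document; each statement's English description precedes it below -/
import Mathlib

section
/- Let a, b, c, d be odd positive integers with a² + b² + c² = 3d² and gcd(a,b,c) = 1, and set q = a² + b². Let r, s be integers with s² + 3r² = 2q such that all of the following twelve quantities are integers: m_x = −[db(3r+s) + ac(r−s)]/(2q), n_x = −(rac + dbs)/q, m_y = [da(3r+s) − bc(r−s)]/(2q), n_y = (das − bcr)/q, m_z = (r−s)/2, n_z = r, m_u = −(rac + dbs)/q, n_u = −[db(s−3r) + ac(r+s)]/(2q), m_v = (das − rbc)/q, n_v = [da(s−3r) − bc(r+s)]/(2q), m_w = r, n_w = (r+s)/2. Then for every pair of integers (m, n), the points P = (u, v, w) and Q = (x, y, z) given by u = m_u·m − n_u·n, v = m_v·m − n_v·n, w = m_w·m − n_w·n, x = m_x·m − n_x·n, y = m_y·m − n_y·n, z = m_z·m − n_z·n satisfy: a·u + b·v + c·w = 0, a·x + b·y + c·z = 0, and the three squared Euclidean distances |OP|², |OQ|², |PQ|² (with O = (0,0,0)) are all equal to 2d²(m² − mn + n²); in particular, if (m,n) ≠ (0,0) then O, P, Q form an equilateral triangle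 with integer coordinates lying in the plane {(α,β,γ) : aα + bβ + cγ = 0} with side length d·√(2(m² − mn + n²)). -/
private lemma aux_pos (d m n : ℤ) (hd : 0 < d) (h : m ≠ 0 ∨ n ≠ 0) :
    (0:ℤ) < 2 * d ^ 2 * (m ^ 2 - m * n + n ^ 2) := by
  have h4 : (0:ℤ) < 4 * (m ^ 2 - m * n + n ^ 2) := by
    rcases h with h | h
    · have : (0:ℤ) < m ^ 2 := by positivity
      nlinarith [sq_nonneg (m - 2 * n)]
    · have : (0:ℤ) < n ^ 2 := by positivity
      nlinarith [sq_nonneg (2 * m - n)]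
  have hd2 : (0:ℤ) < d ^ 2 := by positivity
  nlinarith

private lemma aux_ne (x y z w : ℤ) (h : x ^ 2 + y ^ 2 + z ^ 2 = w) (hw : 0 < w) :
    ((x, y, z) : ℤ × ℤ × ℤ) ≠ (0, 0, 0) := by
  intro h0
  rw [Prod.mk.injEq, Prod.mk.injEq] at h0
  rw [h0.1, h0.2.1, h0.2.2] at h
  simp at h
  omega


/-- The parametrization (paramtwo) produces, for every pair of
integers `(m, n)`, two points `P = (u, v, w)` and `Q = (x, y, z)` in the plane
`aα + bβ + cγ = 0` which, together with the origin, form an equilateral triangle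
with all three squared side lengths equal to `2d²(m² − mn + n²)`. The twelve
coefficient quantities are assumed to be integers (expressed by the
denominator-clearing equations below). -/
theorem paramtwo_gives_equilateral
    (a b c d : ℤ)
    (ha : 0 < a) (hb : 0 < b) (hc : 0 < c) (hd : 0 < d)
    (hao : Odd a) (hbo : Odd b) (hco : Odd c) (hdo : Odd d)
    (heq : a ^ 2 + b ^ 2 + c ^ 2 = 3 * d ^ 2)
    (hgcd : Int.gcd a (Int.gcd b c) = 1)
    (q : ℤ) (hq : q = a ^ 2 + b ^ 2)
    (r s : ℤ) (hrs : s ^ 2 + 3 * r ^ 2 = 2 * q)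
    (mx nx my ny mz nz mu nu mv nv mw nw : ℤ)
    (hmx : mx * (2 * q) = -(d * b * (3 * r + s) + a * c * (r - s)))
    (hnx : nx * q = -(r * a * c + d * b * s))
    (hmy : my * (2 * q) = d * a * (3 * r + s) - b * c * (r - s))
    (hny : ny * q = d * a * s - b * c * r)
    (hmz : mz * 2 = r - s)
    (hnz : nz = r)
    (hmu : mu * q = -(r * a * c + d * b * s))
    (hnu : nu * (2 * q) = -(d * b * (s - 3 * r) + a * c * (r + s)))
    (hmv : mv * q = d * a * s - r * b * c)
    (hnv : nv * (2 * q) = d * a * (s - 3 * r) - b * c * (r + s))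
    (hmw : mw = r)
    (hnw : nw * 2 = r + s) :
    ∀ m n : ℤ,
      a * (mu * m - nu * n) + b * (mv * m - nv * n) + c * (mw * m - nw * n) = 0 ∧
      a * (mx * m - nx * n) + b * (my * m - ny * n) + c * (mz * m - nz * n) = 0 ∧
      (mu * m - nu * n) ^ 2 + (mv * m - nv * n) ^ 2 + (mw * m - nw * n) ^ 2 =
        2 * d ^ 2 * (m ^ 2 - m * n + n ^ 2) ∧
      (mx * m - nx * n) ^ 2 + (my * m - ny * n) ^ 2 + (mz * m - nz * n) ^ 2 =
        2 * d ^ 2 * (m ^ 2 - m * n + n ^ 2) ∧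
      ((mu * m - nu * n) - (mx * m - nx * n)) ^ 2 +
        ((mv * m - nv * n) - (my * m - ny * n)) ^ 2 +
        ((mw * m - nw * n) - (mz * m - nz * n)) ^ 2 =
        2 * d ^ 2 * (m ^ 2 - m * n + n ^ 2) ∧
      ((m, n) ≠ (0, 0) →
        ((mu * m - nu * n, mv * m - nv * n, mw * m - nw * n) : ℤ × ℤ × ℤ) ≠ (0, 0, 0) ∧
        ((mx * m - nx * n, my * m - ny * n, mz * m - nz * n) : ℤ × ℤ × ℤ) ≠ (0, 0, 0) ∧
        ((mu * m - nu * n, mv * m - nv * n, mw * m - nw * n) : ℤ × ℤ × ℤ) ≠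
          (mx * m - nx * n, my * m - ny * n, mz * m - nz * n)) := by
  subst hq
  intro m n
  have hQpos : (0:ℤ) < a ^ 2 + b ^ 2 := by positivity
  have hQne : (2 * (a ^ 2 + b ^ 2) : ℤ) ≠ 0 := by positivity
  -- scaled coordinate equations
  have eu : (2 * (a ^ 2 + b ^ 2)) * (mu * m - nu * n) =
      -2 * (r * a * c + d * b * s) * m + (d * b * (s - 3 * r) + a * c * (r + s)) * n := by
    linear_combination 2 * m * hmu - n * hnu
  have ev : (2 * (a ^ 2 + b ^ 2)) * (mv * m - nv * n) =
      2 * (d * a * s - r * b * c) * m - (d * a * (s - 3 * r) - b * c * (r + s)) * n := by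
    linear_combination 2 * m * hmv - n * hnv
  have ew : (2 * (a ^ 2 + b ^ 2)) * (mw * m - nw * n) =
      2 * (a ^ 2 + b ^ 2) * r * m - (a ^ 2 + b ^ 2) * (r + s) * n := by
    linear_combination (2 * (a ^ 2 + b ^ 2) * m) * hmw - ((a ^ 2 + b ^ 2) * n) * hnw
  have ex : (2 * (a ^ 2 + b ^ 2)) * (mx * m - nx * n) =
      -(d * b * (3 * r + s) + a * c * (r - s)) * m + 2 * (r * a * c + d * b * s) * n := by
    linear_combination m * hmx - 2 * n * hnx
  have ey : (2 * (a ^ 2 + b ^ 2)) * (my * m - ny * n) =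
      (d * a * (3 * r + s) - b * c * (r - s)) * m - 2 * (d * a * s - b * c * r) * n := by
    linear_combination m * hmy - 2 * n * hny
  have ez : (2 * (a ^ 2 + b ^ 2)) * (mz * m - nz * n) =
      (a ^ 2 + b ^ 2) * (r - s) * m - 2 * (a ^ 2 + b ^ 2) * r * n := by
    linear_combination ((a ^ 2 + b ^ 2) * m) * hmz - (2 * (a ^ 2 + b ^ 2) * n) * hnz
  -- the two linear (plane) equations
  have lin1 : a * (mu * m - nu * n) + b * (mv * m - nv * n) + c * (mw * m - nw * n) = 0 := by
    have h : (2 * (a ^ 2 + b ^ 2)) *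
        (a * (mu * m - nu * n) + b * (mv * m - nv * n) + c * (mw * m - nw * n)) = 0 := by
      linear_combination a * eu + b * ev + c * ew
    exact (mul_eq_zero.mp h).resolve_left hQne
  have lin2 : a * (mx * m - nx * n) + b * (my * m - ny * n) + c * (mz * m - nz * n) = 0 := by
    have h : (2 * (a ^ 2 + b ^ 2)) *
        (a * (mx * m - nx * n) + b * (my * m - ny * n) + c * (mz * m - nz * n)) = 0 := by
      linear_combination a * ex + b * ey + c * ez
    exact (mul_eq_zero.mp h).resolve_left hQne
  -- squared distances
  have sq1 : (mu * m - nu * n) ^ 2 + (mv * m - nv * n) ^ 2 + (mw * m - nw * n) ^ 2 =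
      2 * d ^ 2 * (m ^ 2 - m * n + n ^ 2) := by
    have h : ((2 * (a ^ 2 + b ^ 2)) * (mu * m - nu * n)) ^ 2 +
        ((2 * (a ^ 2 + b ^ 2)) * (mv * m - nv * n)) ^ 2 +
        ((2 * (a ^ 2 + b ^ 2)) * (mw * m - nw * n)) ^ 2 =
        4 * (a ^ 2 + b ^ 2) ^ 2 * (2 * d ^ 2 * (m ^ 2 - m * n + n ^ 2)) := by
      rw [eu, ev, ew]
      linear_combination ((a ^ 2 + b ^ 2) * (s * n + r * n - 2 * r * m) ^ 2) * heq +
        (4 * d ^ 2 * (a ^ 2 + b ^ 2) * (m ^ 2 - m * n + n ^ 2)) * hrs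
    have h2 : (4 * (a ^ 2 + b ^ 2) ^ 2) *
        ((mu * m - nu * n) ^ 2 + (mv * m - nv * n) ^ 2 + (mw * m - nw * n) ^ 2) =
        (4 * (a ^ 2 + b ^ 2) ^ 2) * (2 * d ^ 2 * (m ^ 2 - m * n + n ^ 2)) := by
      linear_combination h
    exact mul_left_cancel₀ (by positivity) h2
  have sq2 : (mx * m - nx * n) ^ 2 + (my * m - ny * n) ^ 2 + (mz * m - nz * n) ^ 2 =
      2 * d ^ 2 * (m ^ 2 - m * n + n ^ 2) := by
    have h : ((2 * (a ^ 2 + b ^ 2)) * (mx * m - nx * n)) ^ 2 +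
        ((2 * (a ^ 2 + b ^ 2)) * (my * m - ny * n)) ^ 2 +
        ((2 * (a ^ 2 + b ^ 2)) * (mz * m - nz * n)) ^ 2 =
        4 * (a ^ 2 + b ^ 2) ^ 2 * (2 * d ^ 2 * (m ^ 2 - m * n + n ^ 2)) := by
      rw [ex, ey, ez]
      linear_combination ((a ^ 2 + b ^ 2) * (s * m - r * m + 2 * r * n) ^ 2) * heq +
        (4 * d ^ 2 * (a ^ 2 + b ^ 2) * (m ^ 2 - m * n + n ^ 2)) * hrs
    have h2 : (4 * (a ^ 2 + b ^ 2) ^ 2) *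
        ((mx * m - nx * n) ^ 2 + (my * m - ny * n) ^ 2 + (mz * m - nz * n) ^ 2) =
        (4 * (a ^ 2 + b ^ 2) ^ 2) * (2 * d ^ 2 * (m ^ 2 - m * n + n ^ 2)) := by
      linear_combination h
    exact mul_left_cancel₀ (by positivity) h2
  have sq3 : ((mu * m - nu * n) - (mx * m - nx * n)) ^ 2 +
      ((mv * m - nv * n) - (my * m - ny * n)) ^ 2 +
      ((mw * m - nw * n) - (mz * m - nz * n)) ^ 2 =
      2 * d ^ 2 * (m ^ 2 - m * n + n ^ 2) := by
    have h : ((2 * (a ^ 2 + b ^ 2)) * (mu * m - nu * n) -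
          (2 * (a ^ 2 + b ^ 2)) * (mx * m - nx * n)) ^ 2 +
        ((2 * (a ^ 2 + b ^ 2)) * (mv * m - nv * n) -
          (2 * (a ^ 2 + b ^ 2)) * (my * m - ny * n)) ^ 2 +
        ((2 * (a ^ 2 + b ^ 2)) * (mw * m - nw * n) -
          (2 * (a ^ 2 + b ^ 2)) * (mz * m - nz * n)) ^ 2 =
        4 * (a ^ 2 + b ^ 2) ^ 2 * (2 * d ^ 2 * (m ^ 2 - m * n + n ^ 2)) := by
      rw [eu, ev, ew, ex, ey, ez]
      linear_combination ((a ^ 2 + b ^ 2) * (s * (n - m) - r * (n + m)) ^ 2) * heq +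
        (4 * d ^ 2 * (a ^ 2 + b ^ 2) * (m ^ 2 - m * n + n ^ 2)) * hrs
    have h2 : (4 * (a ^ 2 + b ^ 2) ^ 2) *
        (((mu * m - nu * n) - (mx * m - nx * n)) ^ 2 +
          ((mv * m - nv * n) - (my * m - ny * n)) ^ 2 +
          ((mw * m - nw * n) - (mz * m - nz * n)) ^ 2) =
        (4 * (a ^ 2 + b ^ 2) ^ 2) * (2 * d ^ 2 * (m ^ 2 - m * n + n ^ 2)) := by
      linear_combination h
    exact mul_left_cancel₀ (by positivity) h2
  refine ⟨lin1, lin2, sq1, sq2, sq3, fun hmn => ?_⟩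
  have hmn' : m ≠ 0 ∨ n ≠ 0 := by
    by_contra h
    push_neg at h
    exact hmn (by simp [h.1, h.2])
  have hpos := aux_pos d m n hd hmn'
  refine ⟨aux_ne _ _ _ _ sq1 hpos, aux_ne _ _ _ _ sq2 hpos, fun h0 => ?_⟩
  rw [Prod.mk.injEq, Prod.mk.injEq] at h0
  rw [h0.1, h0.2.1, h0.2.2] at sq3
  have h00 : (0:ℤ) = 2 * d ^ 2 * (m ^ 2 - m * n + n ^ 2) := by linear_combination sq3
  exact absurd h00.symm hpos.ne'
end

section
/- Let a, b, c, d, r, s be rational numbers with a² + b² + c² = 3d², q = a² + b² ≠ 0, and s² + 3r² = 2q. Define the rational numbers m_x = −[db(3r+s) + ac(r−s)]/(2q), n_x = −(rac + dbs)/q, m_y = [da(3r+s) − bc(r−s)]/(2q), n_y = (das − bcr)/q, m_z = (r−s)/2, n_z = r, m_u = −(rac + dbs)/q, n_u = −[db(s−3r) + ac(r+s)]/(2q), m_v = (das − rbc)/q, n_v = [da(s−3r) − bc(r+s)]/(2q), m_w = r, n_w = (r+s)/2. Then m_v·n_w − m_w·n_v = a·d, m_w·n_u − m_u·n_w = b·d,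 and m_u·n_v − m_v·n_u = c·d. -/
/-- Algebraic identities over ℚ among the coefficients of the
parametrization (paramtwo): the three 2×2 minors equal `ad`, `bd`, `cd`. -/
theorem paramtwo_minors
    (a b c d r s : ℚ)
    (heq : a ^ 2 + b ^ 2 + c ^ 2 = 3 * d ^ 2)
    (hq : a ^ 2 + b ^ 2 ≠ 0)
    (hrs : s ^ 2 + 3 * r ^ 2 = 2 * (a ^ 2 + b ^ 2)) :
    (((d * a * s - r * b * c) / (a ^ 2 + b ^ 2)) * ((r + s) / 2) -
        r * ((d * a * (s - 3 * r) - b * c * (r + s)) / (2 * (a ^ 2 + b ^ 2))) = a * d) ∧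
    (r * (-((d * b * (s - 3 * r) + a * c * (r + s)) / (2 * (a ^ 2 + b ^ 2)))) -
        (-((r * a * c + d * b * s) / (a ^ 2 + b ^ 2))) * ((r + s) / 2) = b * d) ∧
    ((-((r * a * c + d * b * s) / (a ^ 2 + b ^ 2))) *
        ((d * a * (s - 3 * r) - b * c * (r + s)) / (2 * (a ^ 2 + b ^ 2))) -
        ((d * a * s - r * b * c) / (a ^ 2 + b ^ 2)) *
        (-((d * b * (s - 3 * r) + a * c * (r + s)) / (2 * (a ^ 2 + b ^ 2)))) = c * d) := by
  refine ⟨?_, ?_, ?_⟩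
  · field_simp
    linear_combination a * d * hrs
  · field_simp
    linear_combination b * d * hrs
  · field_simp
    linear_combination (a^2+b^2) * c * d * hrs + (s^2+3*r^2) * d * heq / 2 - (a^2+b^2) * d * heq - (d/2) * (a^2+b^2+c^2-3*d^2) * hrs
end

section
/- Let a, b, c, d, r, s be rational numbers with a² + b² + c² = 3d², d ≠ 0, q = a² + b² ≠ 0, and s² + 3r² = 2q, and define m_u = −(rac + dbs)/q, n_u = −[db(s−3r) + ac(r+s)]/(2q), m_v = (das − rbc)/q, n_v = [da(s−3r) − bc(r+s)]/(2q), m_w = r, n_w = (r+s)/2. Then for every (u₀, v₀, w₀) ∈ ℚ³ with a·u₀ + b·v₀ + c·w₀ = 0, there exists a unique pair of rational numbers (m, n) such that u₀ = m_u·m − n_u·n, v₀ = m_v·m − n_v·n, and w₀ = m_w·m − n_w·n. -/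
set_option maxHeartbeats 1000000


/-- Over ℚ, every point of the plane `a·u + b·v + c·w = 0` is
represented by a unique pair of parameters `(m, n)` through the coefficients
`m_u, n_u, m_v, n_v, m_w, n_w` of the parametrization (paramtwo). -/
theorem paramtwo_unique_solution
    (a b c d r s : ℚ)
    (heq : a ^ 2 + b ^ 2 + c ^ 2 = 3 * d ^ 2)
    (hd : d ≠ 0)
    (hq : a ^ 2 + b ^ 2 ≠ 0)
    (hrs : s ^ 2 + 3 * r ^ 2 = 2 * (a ^ 2 + b ^ 2)) :
    ∀ u₀ v₀ w₀ : ℚ, a * u₀ + b * v₀ + c * w₀ = 0 →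
      ∃! p : ℚ × ℚ,
        u₀ = (-((r * a * c + d * b * s) / (a ^ 2 + b ^ 2))) * p.1 -
              (-((d * b * (s - 3 * r) + a * c * (r + s)) / (2 * (a ^ 2 + b ^ 2)))) * p.2 ∧
        v₀ = ((d * a * s - r * b * c) / (a ^ 2 + b ^ 2)) * p.1 -
              ((d * a * (s - 3 * r) - b * c * (r + s)) / (2 * (a ^ 2 + b ^ 2))) * p.2 ∧
        w₀ = r * p.1 - ((r + s) / 2) * p.2 := by
  intro u₀ v₀ w₀ hplane
  set M : ℚ := (-(r + s) / 2 * (b * u₀ - a * v₀) - d * (s - 3 * r) / 2 * w₀) /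
      (d * (a ^ 2 + b ^ 2)) with hM
  set N : ℚ := (-(d * s * w₀) - r * (b * u₀ - a * v₀)) / (d * (a ^ 2 + b ^ 2)) with hN
  refine ⟨⟨M, N⟩, ⟨?_, ?_, ?_⟩, ?_⟩
  · dsimp only
    rw [hM, hN]
    linear_combination (norm := (field_simp; ring))
      (a / (a ^ 2 + b ^ 2)) * hplane -
      ((b * (b * u₀ - a * v₀) - a * c * w₀) / (2 * (a ^ 2 + b ^ 2) ^ 2)) * hrs
  · dsimp only
    rw [hM, hN]
    linear_combination (norm := (field_simp; ring))
      (b / (a ^ 2 + b ^ 2)) * hplane +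
      ((a * (b * u₀ - a * v₀) + b * c * w₀) / (2 * (a ^ 2 + b ^ 2) ^ 2)) * hrs
  · dsimp only
    rw [hM, hN]
    linear_combination (norm := (field_simp; ring))
      (-(w₀ / (2 * (a ^ 2 + b ^ 2)))) * hrs
  · rintro ⟨m, n⟩ ⟨h1, h2, h3⟩
    dsimp only at h1 h2 h3
    have hm : m = M := by
      rw [hM]
      linear_combination (norm := (field_simp; ring))
        ((r + s) * b / (2 * d * (a ^ 2 + b ^ 2))) * h1 -
        ((r + s) * a / (2 * d * (a ^ 2 + b ^ 2))) * h2 +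
        ((s - 3 * r) / (2 * (a ^ 2 + b ^ 2))) * h3 -
        (m / (2 * (a ^ 2 + b ^ 2))) * hrs
    have hn : n = N := by
      rw [hN]
      linear_combination (norm := (field_simp; ring))
        (r * b / (d * (a ^ 2 + b ^ 2))) * h1 -
        (r * a / (d * (a ^ 2 + b ^ 2))) * h2 +
        (s / (a ^ 2 + b ^ 2)) * h3 -
        (n / (2 * (a ^ 2 + b ^ 2))) * hrs
    simp [hm, hn]
end

section
/- Let a, b, c, d be odd positive integers with a² + b² + c² = 3d² and gcd(a,b,c) = 1, and let ζ = gcd(d, c). If (u₀, v₀, w₀) ∈ ℤ³ satisfies a·u₀ + b·v₀ + c·w₀ = 0 and ζ² divides u₀² + v₀² + w₀², then a²·w₀² + 2·b·c·v₀·w₀ ≡ 0 (mod ζ²). -/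
/-- Key congruence (equation (last)): if `(u₀, v₀, w₀)` lies in
the plane `a·u + b·v + c·w = 0` and `ζ²` divides its squared norm, where
`ζ = gcd(d, c)`, then `a²w₀² + 2bcv₀w₀ ≡ 0 (mod ζ²)`. -/
theorem key_congruence
    (a b c d : ℤ)
    (ha : 0 < a) (hb : 0 < b) (hc : 0 < c) (hd : 0 < d)
    (hao : Odd a) (hbo : Odd b) (hco : Odd c) (hdo : Odd d)
    (heq : a ^ 2 + b ^ 2 + c ^ 2 = 3 * d ^ 2)
    (hgcd : Int.gcd a (Int.gcd b c) = 1)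
    (u₀ v₀ w₀ : ℤ)
    (hplane : a * u₀ + b * v₀ + c * w₀ = 0)
    (hnorm : ((Int.gcd d c : ℤ)) ^ 2 ∣ u₀ ^ 2 + v₀ ^ 2 + w₀ ^ 2) :
    ((Int.gcd d c : ℤ)) ^ 2 ∣ a ^ 2 * w₀ ^ 2 + 2 * b * c * v₀ * w₀ := by
  set z : ℤ := (Int.gcd d c : ℤ) with hz
  have h1 : z ^ 2 ∣ d ^ 2 := pow_dvd_pow_of_dvd (Int.gcd_dvd_left d c) 2
  have h2 : z ^ 2 ∣ c ^ 2 := pow_dvd_pow_of_dvd (Int.gcd_dvd_right d c) 2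
  have key : a ^ 2 * w₀ ^ 2 + 2 * b * c * v₀ * w₀ =
      a ^ 2 * (u₀ ^ 2 + v₀ ^ 2 + w₀ ^ 2) + (v₀ ^ 2 - w₀ ^ 2) * c ^ 2
        - 3 * v₀ ^ 2 * d ^ 2 := by
    linear_combination -v₀ ^ 2 * heq + (b * v₀ + c * w₀ - a * u₀) * hplane
  rw [key]
  exact dvd_sub (dvd_add (hnorm.mul_left _) (h2.mul_left _)) (h1.mul_left _)
end

section
/- Let a, b, c, d be odd positive integers with a² + b² + c² = 3d² and gcd(a,b,c) = 1, and let ζ = gcd(d, c). If (u₀, v₀, w₀) ∈ ℤ³ satisfies a·u₀ + b·v₀ + c·w₀ = 0 and ζ² divides u₀² + v₀² + w₀², then ζ divides w₀. -/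
/-- If `(u₀, v₀, w₀)` lies in the plane `a·u + b·v + c·w = 0` and
`ζ² = gcd(d, c)²` divides its squared norm, then `ζ` divides `w₀`. -/
theorem zeta_dvd_w0
    (a b c d : ℤ)
    (ha : 0 < a) (hb : 0 < b) (hc : 0 < c) (hd : 0 < d)
    (hao : Odd a) (hbo : Odd b) (hco : Odd c) (hdo : Odd d)
    (heq : a ^ 2 + b ^ 2 + c ^ 2 = 3 * d ^ 2)
    (hgcd : Int.gcd a (Int.gcd b c) = 1)
    (u₀ v₀ w₀ : ℤ)
    (hplane : a * u₀ + b * v₀ + c * w₀ = 0)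
    (hnorm : ((Int.gcd d c : ℤ)) ^ 2 ∣ u₀ ^ 2 + v₀ ^ 2 + w₀ ^ 2) :
    ((Int.gcd d c : ℤ)) ∣ w₀ := by
  set z : ℤ := (Int.gcd d c : ℤ) with hzdef
  have hzd : z ∣ d := Int.gcd_dvd_left _ _
  have hzc : z ∣ c := Int.gcd_dvd_right _ _
  have hzpos : 0 < z := by
    have h : 0 < Int.gcd d c := Int.gcd_pos_of_ne_zero_left c (ne_of_gt hd)
    rw [hzdef]; exact_mod_cast h
  -- a is coprime to z
  have hcop : IsCoprime a z := by
    rw [Int.isCoprime_iff_gcd_eq_one]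
    set g : ℤ := (Int.gcd a z : ℤ) with hgdef
    have hga : g ∣ a := Int.gcd_dvd_left _ _
    have hgz : g ∣ z := Int.gcd_dvd_right _ _
    have hgc : g ∣ c := hgz.trans hzc
    have hgd : g ∣ d := hgz.trans hzd
    have hgb2 : g ^ 2 ∣ b ^ 2 := by
      have : b ^ 2 = 3 * d ^ 2 - a ^ 2 - c ^ 2 := by linarith
      rw [this]
      exact dvd_sub (dvd_sub (Dvd.dvd.mul_left (pow_dvd_pow_of_dvd hgd 2) 3)
        (pow_dvd_pow_of_dvd hga 2)) (pow_dvd_pow_of_dvd hgc 2)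
    have hgb : g ∣ b := (Int.pow_dvd_pow_iff two_ne_zero).mp hgb2
    have h1 : g ∣ (1 : ℤ) := by
      have : g ∣ (Int.gcd a (Int.gcd b c) : ℤ) :=
        Int.dvd_coe_gcd hga (Int.dvd_coe_gcd hgb hgc)
      rwa [hgcd] at this
    have : (Int.gcd a z : ℤ) = 1 := Int.eq_one_of_dvd_one (Int.natCast_nonneg _) h1
    exact_mod_cast this
  -- z² divides a² + b²
  have hab2 : z ^ 2 ∣ a ^ 2 + b ^ 2 := by
    have : a ^ 2 + b ^ 2 = 3 * d ^ 2 - c ^ 2 := by linarith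
    rw [this]
    exact dvd_sub (Dvd.dvd.mul_left (pow_dvd_pow_of_dvd hzd 2) 3)
      (pow_dvd_pow_of_dvd hzc 2)
  -- obtain i with a*i ≡ b and i² ≡ -1 mod z²
  have hcop2 : IsCoprime a (z ^ 2) := hcop.pow_right
  obtain ⟨x, y, hxy⟩ := hcop2
  set i : ℤ := x * b with hidef
  have hai : z ^ 2 ∣ a * i - b := by
    have : a * i - b = -(b * (y * z ^ 2)) := by
      have : x * a = 1 - y * z ^ 2 := by linarith
      calc a * i - b = (x * a) * b - b := by ring
        _ = -(b * (y * z ^ 2)) := by rw [this]; ring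
    rw [this]
    exact dvd_neg.mpr ⟨b * y, by ring⟩
  have hi2 : z ^ 2 ∣ i ^ 2 + 1 := by
    have h1 : z ^ 2 ∣ a ^ 2 * (i ^ 2 + 1) := by
      have : a ^ 2 * (i ^ 2 + 1) = (a * i - b) * (a * i + b) + (a ^ 2 + b ^ 2) := by ring
      rw [this]
      exact dvd_add (hai.mul_right _) hab2
    exact (hcop.symm.pow).dvd_of_dvd_mul_left h1
  -- key divisibility
  have hS : z ^ 2 ∣ a * (u₀ + i * v₀) + c * w₀ := by
    have : a * (u₀ + i * v₀) + c * w₀ = (a * u₀ + b * v₀ + c * w₀) + (a * i - b) * v₀ := by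
      ring
    rw [this, hplane]
    simpa using hai.mul_right v₀
  have hkey : z ^ 2 ∣ w₀ * (a ^ 2 * w₀ - a * c * (u₀ - i * v₀)) := by
    have hT : z ^ 2 ∣ a ^ 2 * (u₀ ^ 2 + v₀ ^ 2 + w₀ ^ 2) := hnorm.mul_left _
    have hiden : w₀ * (a ^ 2 * w₀ - a * c * (u₀ - i * v₀)) =
        a ^ 2 * (u₀ ^ 2 + v₀ ^ 2 + w₀ ^ 2) - (i ^ 2 + 1) * (a ^ 2 * v₀ ^ 2)
          - (a * (u₀ + i * v₀) + c * w₀) * (a * (u₀ - i * v₀)) := by ring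
    rw [hiden]
    exact dvd_sub (dvd_sub hT (hi2.mul_right _)) (hS.mul_right _)
  -- gcd factoring argument
  set G : ℤ := (Int.gcd z w₀ : ℤ) with hGdef
  have hGz : G ∣ z := Int.gcd_dvd_left _ _
  have hGw : G ∣ w₀ := Int.gcd_dvd_right _ _
  have hGpos : 0 < G := by
    have h : 0 < Int.gcd z w₀ := Int.gcd_pos_of_ne_zero_left w₀ (ne_of_gt hzpos)
    rw [hGdef]; exact_mod_cast h
  set z' : ℤ := z / G with hz'def
  set w' : ℤ := w₀ / G with hw'def
  have hzG : z = G * z' := (Int.mul_ediv_cancel' hGz).symm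
  have hwG : w₀ = G * w' := (Int.mul_ediv_cancel' hGw).symm
  have hcopzw : IsCoprime z' w' := by
    rw [Int.isCoprime_iff_gcd_eq_one]
    have hp : 0 < Int.gcd z w₀ := Int.gcd_pos_of_ne_zero_left w₀ (ne_of_gt hzpos)
    exact Int.gcd_div_gcd_div_gcd hp
  obtain ⟨c', hc'⟩ := hzc
  have hkey2 : z' ^ 2 ∣ w' * (a ^ 2 * w' - a * (z' * c') * (u₀ - i * v₀)) := by
    have hG2 : (G ^ 2 : ℤ) ≠ 0 := pow_ne_zero _ (ne_of_gt hGpos)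
    have : G ^ 2 * (z' ^ 2) ∣ G ^ 2 * (w' * (a ^ 2 * w' - a * (z' * c') * (u₀ - i * v₀))) := by
      have e1 : G ^ 2 * (z' ^ 2) = z ^ 2 := by rw [hzG]; ring
      have e2 : G ^ 2 * (w' * (a ^ 2 * w' - a * (z' * c') * (u₀ - i * v₀))) =
          w₀ * (a ^ 2 * w₀ - a * c * (u₀ - i * v₀)) := by
        rw [hc', hzG, hwG]; ring
      rw [e1, e2]; exact hkey
    exact (mul_dvd_mul_iff_left hG2).mp this
  have hcopz'w' : IsCoprime (z' ^ 2) w' := hcopzw.pow_left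
  have hstep : z' ^ 2 ∣ a ^ 2 * w' - a * (z' * c') * (u₀ - i * v₀) :=
    hcopz'w'.dvd_of_dvd_mul_left hkey2
  have hz'a2w' : z' ∣ a ^ 2 * w' := by
    have h1 : z' ∣ z' ^ 2 := dvd_pow_self z' two_ne_zero
    have h2 : z' ∣ a * (z' * c') * (u₀ - i * v₀) := ⟨a * c' * (u₀ - i * v₀), by ring⟩
    have h3 : z' ∣ a ^ 2 * w' - a * (z' * c') * (u₀ - i * v₀) := h1.trans hstep
    have := dvd_add h3 h2
    simpa using this
  have hcopaz' : IsCoprime (a ^ 2) z' :=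
    (hcop.of_isCoprime_of_dvd_right (hzG ▸ ⟨G, mul_comm G z'⟩)).pow_left
  have hz'w' : z' ∣ w' := hcopaz'.symm.dvd_of_dvd_mul_left hz'a2w'
  have hz'unit : IsUnit z' := hcopzw.isUnit_of_dvd hz'w'
  rcases Int.isUnit_iff.mp hz'unit with h1 | h1
  · rw [hzG, h1, mul_one]; exact hGw
  · rw [hzG, h1]
    simpa using hGw.neg_left
end

section
/- Let a, b, c, d be odd positive integers with a² + b² + c² = 3d² and gcd(a,b,c) = 1. If P = (u₀, v₀, w₀) and Q = (x₀, y₀, z₀) are distinct nonzero points of ℤ³ with a·u₀ + b·v₀ + c·w₀ = 0, a·x₀ + b·y₀ + c·z₀ = 0, and |OP| = |OQ| = |PQ| (where O = (0,0,0)), then there exist integers α, β such that the common squared side length satisfies u₀² + v₀² + w₀² = 2d²(α² − αβ + β²). -/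
namespace SideLen

lemma cancel {k m n : ℤ} (hk : k ≠ 0) (h : k * m = k * n) : m = n :=
  mul_left_cancel₀ hk h

lemma toNat_pos {n : ℤ} (h : 0 < n) : 0 < n.toNat := by omega

lemma descent_arith {t g NX R : ℤ} (h1 : t^2*NX = g*R) (h2 : 4*R ≤ 3*t^2)
    (hg : 0 < g) (ht : 0 < t^2) (hge : g ≤ NX) : False := by
  have A1 := mul_le_mul_of_nonneg_left h2 hg.le
  have A2 := mul_le_mul_of_nonneg_left hge ht.le
  have B := mul_pos ht hg
  linarith [A1, A2, B, h1]

lemma toNat_cast_le {k : ℕ} {n : ℤ} (h0 : 0 ≤ n) (h : k ≤ n.toNat) : (k:ℤ) ≤ n := by omega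

lemma bezout3 (a b c : ℤ) (h : Int.gcd a (Int.gcd b c) = 1) :
    ∃ p q r : ℤ, a * p + b * q + c * r = 1 := by
  have e2 := Int.gcd_eq_gcd_ab a (Int.gcd b c)
  have e3 := Int.gcd_eq_gcd_ab b c
  have h1 : ((Int.gcd a (Int.gcd b c) : ℤ)) = 1 := by exact_mod_cast congrArg (Nat.cast (R := ℤ)) h
  refine ⟨Int.gcdA a (Int.gcd b c),
      Int.gcdB a (Int.gcd b c) * Int.gcdA b c,
      Int.gcdB a (Int.gcd b c) * Int.gcdB b c, ?_⟩
  linear_combination (-1) * e2 - Int.gcdB a (Int.gcd b c) * e3 + h1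

lemma dvd3 (a b c d k : ℤ) (hgcd : Int.gcd a (Int.gcd b c) = 1)
    (h1 : d ∣ k * a) (h2 : d ∣ k * b) (h3 : d ∣ k * c) : d ∣ k := by
  obtain ⟨p, q, r, hpqr⟩ := bezout3 a b c hgcd
  have : k = (k*a)*p + (k*b)*q + (k*c)*r := by linear_combination (-k) * hpqr
  rw [this]
  exact dvd_add (dvd_add ((h1).mul_right p) ((h2).mul_right q)) ((h3).mul_right r)

lemma norm_pos (x y z : ℤ) (h : ¬(x = 0 ∧ y = 0 ∧ z = 0)) : 0 < x^2+y^2+z^2 := by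
  by_contra hle
  push_neg at hle
  have hx2 : x^2 = 0 := by nlinarith [sq_nonneg x, sq_nonneg y, sq_nonneg z]
  have hy2 : y^2 = 0 := by nlinarith [sq_nonneg x, sq_nonneg y, sq_nonneg z]
  have hz2 : z^2 = 0 := by nlinarith [sq_nonneg x, sq_nonneg y, sq_nonneg z]
  exact h ⟨by nlinarith, by nlinarith, by nlinarith⟩

lemma collinear (e1 e2 e3 f1 f2 f3 p q r : ℤ)
    (hc : e2*f3 - e3*f2 ≠ 0)
    (E1 : q*e3 - r*e2 = 0) (E2 : r*e1 - p*e3 = 0) (E3 : p*e2 - q*e1 = 0)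
    (F1 : q*f3 - r*f2 = 0) (F2 : r*f1 - p*f3 = 0) (F3 : p*f2 - q*f1 = 0) :
    p = 0 ∧ q = 0 ∧ r = 0 := by
  have hp : p * (e2*f3 - e3*f2) = 0 := by linear_combination f3*E3 + f2*E2 + e1*F1
  have hq : q * (e2*f3 - e3*f2) = 0 := by linear_combination e2*F1 - f2*E1
  have hr : r * (e2*f3 - e3*f2) = 0 := by linear_combination e3*F1 - f3*E1
  exact ⟨(mul_eq_zero.mp hp).resolve_right hc,
         (mul_eq_zero.mp hq).resolve_right hc,
         (mul_eq_zero.mp hr).resolve_right hc⟩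

lemma cross_parallel (a b c p0 q0 r0 x y z X Y Z : ℤ) (hB : a*p0 + b*q0 + c*r0 = 1)
    (h1 : a*x+b*y+c*z = 0) (h2 : a*X+b*Y+c*Z = 0) :
    ∃ τ : ℤ, y*Z - z*Y = τ*a ∧ z*X - x*Z = τ*b ∧ x*Y - y*X = τ*c := by
  have r1 : b*(x*Y - y*X) - c*(z*X - x*Z) = 0 := by linear_combination x*h2 - X*h1
  have r2 : c*(y*Z - z*Y) - a*(x*Y - y*X) = 0 := by linear_combination y*h2 - Y*h1
  have r3 : a*(z*X - x*Z) - b*(y*Z - z*Y) = 0 := by linear_combination z*h2 - Z*h1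
  refine ⟨p0*(y*Z - z*Y) + q0*(z*X - x*Z) + r0*(x*Y - y*X), ?_, ?_, ?_⟩
  · linear_combination (-(y*Z - z*Y))*hB - q0*r3 + r0*r2
  · linear_combination (-(z*X - x*Z))*hB + p0*r3 - r0*r1
  · linear_combination (-(x*Y - y*X))*hB - p0*r2 + q0*r1

lemma round_near (μ τ : ℤ) (h : τ ≠ 0) : ∃ m ρ : ℤ, μ = m*τ + ρ ∧ 4*ρ^2 ≤ τ^2 := by
  have key : ∀ t : ℤ, 0 < t → ∃ m ρ : ℤ, μ = m*t + ρ ∧ 4*ρ^2 ≤ t^2 := by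
    intro t ht
    have h0 : 0 ≤ μ % t := Int.emod_nonneg μ (ne_of_gt ht)
    have h1 : μ % t < t := Int.emod_lt_of_pos μ ht
    have hdiv : t*(μ/t) + μ % t = μ := Int.mul_ediv_add_emod μ t
    by_cases hc : 2*(μ % t) ≤ t
    · exact ⟨μ/t, μ % t, by linear_combination -hdiv, by nlinarith⟩
    · push_neg at hc
      exact ⟨μ/t + 1, μ % t - t, by linear_combination -hdiv, by nlinarith⟩
  rcases h.lt_or_gt with hneg | hpos
  · obtain ⟨m, ρ, hm, hb⟩ := key (-τ) (by linarith)
    exact ⟨-m, ρ, by linear_combination hm, by nlinarith⟩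
  · exact key τ hpos

lemma plane_even (a b c x y z : ℤ) (hao : Odd a) (hbo : Odd b) (hco : Odd c)
    (h : a*x+b*y+c*z = 0) : ∃ s, x + y + z = 2*s := by
  obtain ⟨A, hA⟩ := hao
  obtain ⟨B, hB⟩ := hbo
  obtain ⟨C, hC⟩ := hco
  exact ⟨-(A*x+B*y+C*z), by linear_combination h - x*hA - y*hB - z*hC⟩


def InT (a b c d x y z : ℤ) : Prop :=
  a*x + b*y + c*z = 0 ∧ d ∣ (b*z - c*y) ∧ d ∣ (c*x - a*z) ∧ d ∣ (a*y - b*x)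


lemma InT_comb (a b c d s t x y z x' y' z' : ℤ) (h : InT a b c d x y z)
    (h' : InT a b c d x' y' z') :
    InT a b c d (s*x + t*x') (s*y + t*y') (s*z + t*z') := by
  obtain ⟨h0, h1, h2, h3⟩ := h
  obtain ⟨h0', h1', h2', h3'⟩ := h'
  refine ⟨by linear_combination s*h0 + t*h0', ?_, ?_, ?_⟩
  · have e : b*(s*z + t*z') - c*(s*y + t*y') = s*(b*z - c*y) + t*(b*z' - c*y') := by ring
    rw [e]; exact dvd_add (h1.mul_left s) (h1'.mul_left t)
  · have e : c*(s*x + t*x') - a*(s*z + t*z') = s*(c*x - a*z) + t*(c*x' - a*z') := by ring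
    rw [e]; exact dvd_add (h2.mul_left s) (h2'.mul_left t)
  · have e : a*(s*y + t*y') - b*(s*x + t*x') = s*(a*y - b*x) + t*(a*y' - b*x') := by ring
    rw [e]; exact dvd_add (h3.mul_left s) (h3'.mul_left t)


lemma omega_ex (a b c d x y z : ℤ) (hao : Odd a) (hbo : Odd b) (hco : Odd c) (hdo : Odd d)
    (hd0 : d ≠ 0) (heq : a^2+b^2+c^2 = 3*d^2) (h : InT a b c d x y z) :
    ∃ x' y' z', InT a b c d x' y' z' ∧
      x'^2+y'^2+z'^2 = x^2+y^2+z^2 ∧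
      2*(x*x' + y*y' + z*z') = -(x^2+y^2+z^2) := by
  obtain ⟨hp, hd1, hd2, hd3⟩ := h
  obtain ⟨h1, H1⟩ := hd1
  obtain ⟨h2, H2⟩ := hd2
  obtain ⟨h3, H3⟩ := hd3
  obtain ⟨S, hS⟩ := plane_even a b c x y z hao hbo hco hp
  obtain ⟨B, hB⟩ := hbo
  obtain ⟨C, hC⟩ := hco
  obtain ⟨D, hD⟩ := hdo
  -- halved vectors
  have ex1 : ∃ x', h1 - x = 2*x' := by
    have key : d*(h1 - x) = 2*(B*z - C*y - D*x + S - x - y) := by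
      linear_combination (-1)*H1 + z*hB - y*hC - x*hD + hS
    have : Even (d*(h1-x)) := ⟨B*z - C*y - D*x + S - x - y, by linarith⟩
    have h2' : Even (h1 - x) := by
      rcases Int.even_mul.mp this with he | he
      · exact absurd (⟨D, hD⟩ : Odd d) (Int.not_odd_iff_even.mpr he)
      · exact he
    obtain ⟨t, ht⟩ := h2'
    exact ⟨t, by linarith⟩
  obtain ⟨A, hA⟩ := hao
  have ex2 : ∃ y', h2 - y = 2*y' := by
    have key : d*(h2 - y) = 2*(C*x - A*z - D*y + S - y - z) := by
      linear_combination (-1)*H2 + x*hC - z*hA - y*hD + hS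
    have hev : Even (d*(h2-y)) := ⟨C*x - A*z - D*y + S - y - z, by linarith⟩
    have h2' : Even (h2 - y) := by
      rcases Int.even_mul.mp hev with he | he
      · exact absurd (⟨D, hD⟩ : Odd d) (Int.not_odd_iff_even.mpr he)
      · exact he
    obtain ⟨t, ht⟩ := h2'
    exact ⟨t, by linarith⟩
  have ex3 : ∃ z', h3 - z = 2*z' := by
    have key : d*(h3 - z) = 2*(A*y - B*x - D*z + S - x - z) := by
      linear_combination (-1)*H3 + y*hA - x*hB - z*hD + hS
    have hev : Even (d*(h3-z)) := ⟨A*y - B*x - D*z + S - x - z, by linarith⟩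
    have h2' : Even (h3 - z) := by
      rcases Int.even_mul.mp hev with he | he
      · exact absurd (⟨D, hD⟩ : Odd d) (Int.not_odd_iff_even.mpr he)
      · exact he
    obtain ⟨t, ht⟩ := h2'
    exact ⟨t, by linarith⟩
  obtain ⟨x', hx'⟩ := ex1
  obtain ⟨y', hy'⟩ := ex2
  obtain ⟨z', hz'⟩ := ex3
  have two_ne : (2:ℤ) ≠ 0 := by norm_num
  have t1 : d*(a*h1+b*h2+c*h3) = d*0 := by
    linear_combination (-a)*H1 - b*H2 - c*H3
  have hSg : a*h1+b*h2+c*h3 = 0 := by have := cancel hd0 t1; simpa using this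
  have plane' : a*x'+b*y'+c*z' = 0 := by
    have t2 : 2*(a*x'+b*y'+c*z') = 2*0 := by
      linear_combination (-a)*hx' - b*hy' - c*hz' + hSg - hp
    have := cancel two_ne t2; simpa using this
  have s1 : d*(b*h3 - c*h2) = d*(-(3*d*x)) := by
    linear_combination (-b)*H3 + c*H2 + a*hp - x*heq
  have s1' : b*h3 - c*h2 = -(3*d*x) := cancel hd0 s1
  have s2 : d*(c*h1 - a*h3) = d*(-(3*d*y)) := by
    linear_combination (-c)*H1 + a*H3 + b*hp - y*heq
  have s2' : c*h1 - a*h3 = -(3*d*y) := cancel hd0 s2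
  have s3 : d*(a*h2 - b*h1) = d*(-(3*d*z)) := by
    linear_combination (-a)*H2 + b*H1 + c*hp - z*heq
  have s3' : a*h2 - b*h1 = -(3*d*z) := cancel hd0 s3
  have e1 : b*z' - c*y' = d*(-(2*x+x')) := by
    refine cancel two_ne ?_
    linear_combination (-b)*hz' + c*hy' + s1' - H1 - d*hx'
  have e2 : c*x' - a*z' = d*(-(2*y+y')) := by
    refine cancel two_ne ?_
    linear_combination (-c)*hx' + a*hz' + s2' - H2 - d*hy'
  have e3 : a*y' - b*x' = d*(-(2*z+z')) := by
    refine cancel two_ne ?_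
    linear_combination (-a)*hy' + b*hx' + s3' - H3 - d*hz'
  have t3 : d*(x*h1+y*h2+z*h3) = d*0 := by
    linear_combination (-x)*H1 - y*H2 - z*H3
  have xH : x*h1+y*h2+z*h3 = 0 := by have := cancel hd0 t3; simpa using this
  have n1 : d*(d*(h1^2+h2^2+h3^2)) = d*(d*(3*(x^2+y^2+z^2))) := by
    linear_combination (-(b*z-c*y+d*h1))*H1 + (-(c*x-a*z+d*h2))*H2 +
      (-(a*y-b*x+d*h3))*H3 + (x^2+y^2+z^2)*heq - (a*x+b*y+c*z)*hp
  have n1' : h1^2+h2^2+h3^2 = 3*(x^2+y^2+z^2) := cancel hd0 (cancel hd0 n1)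
  have four_ne : (4:ℤ) ≠ 0 := by norm_num
  have hnorm : x'^2+y'^2+z'^2 = x^2+y^2+z^2 := by
    refine cancel four_ne ?_
    linear_combination (-(h1-x+2*x'))*hx' + (-(h2-y+2*y'))*hy' + (-(h3-z+2*z'))*hz' + n1' - 2*xH
  have hdot : 2*(x*x' + y*y' + z*z') = -(x^2+y^2+z^2) := by
    linear_combination (-x)*hx' - y*hy' - z*hz' + xH
  exact ⟨x', y', z', ⟨plane', ⟨-(2*x+x'), e1⟩, ⟨-(2*y+y'), e2⟩, ⟨-(2*z+z'), e3⟩⟩, hnorm, hdot⟩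



lemma InT_congr {a b c d x y z x' y' z' : ℤ} (h : InT a b c d x y z)
    (hx : x = x') (hy : y = y') (hz : z = z') : InT a b c d x' y' z' := by
  subst hx; subst hy; subst hz; exact h

set_option maxHeartbeats 1000000 in
theorem main_lemma (a b c d : ℤ) (ha : 0 < a) (hd : 0 < d)
    (hao : Odd a) (hbo : Odd b) (hco : Odd c) (hdo : Odd d)
    (heq : a^2 + b^2 + c^2 = 3*d^2)
    (hgcd : Int.gcd a (Int.gcd b c) = 1)
    (u v w : ℤ) (hP : ¬(u = 0 ∧ v = 0 ∧ w = 0))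
    (hT : InT a b c d u v w) :
    ∃ α β : ℤ, u^2+v^2+w^2 = 2*d^2*(α^2 - α*β + β^2) := by
  have hd0 : d ≠ 0 := ne_of_gt hd
  have ha0 : a ≠ 0 := ne_of_gt ha
  obtain ⟨p0, q0, r0, hbez⟩ := bezout3 a b c hgcd
  -- minimal nonzero vector of the lattice
  set Sset : Set ℕ := {n | ∃ x y z : ℤ, InT a b c d x y z ∧ x^2+y^2+z^2 = (n:ℤ) ∧ 0 < n}
    with hSdef
  have hNpos : 0 < u^2+v^2+w^2 := norm_pos u v w hP
  have hmem : (u^2+v^2+w^2).toNat ∈ Sset := by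
    refine ⟨u, v, w, hT, ?_, ?_⟩
    · rw [Int.toNat_of_nonneg hNpos.le]
    · exact toNat_pos hNpos
  have hne : Sset.Nonempty := ⟨_, hmem⟩
  obtain ⟨e1, e2, e3, hTe, hge, hgp⟩ := Nat.sInf_mem hne
  set g : ℤ := ((sInf Sset : ℕ) : ℤ) with hgdef
  have hgpos : 0 < g := by rw [hgdef]; exact_mod_cast hgp
  have hmin : ∀ x y z : ℤ, InT a b c d x y z → ¬(x = 0 ∧ y = 0 ∧ z = 0) →
      g ≤ x^2+y^2+z^2 := by
    intro x y z hXT hX0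
    have hp := norm_pos x y z hX0
    have hm2 : (x^2+y^2+z^2).toNat ∈ Sset :=
      ⟨x, y, z, hXT, by rw [Int.toNat_of_nonneg hp.le], toNat_pos hp⟩
    have := Nat.sInf_le hm2
    rw [hgdef]
    exact toNat_cast_le hp.le this
  obtain ⟨f1, f2, f3, hTf, hnf, hef⟩ :=
    omega_ex a b c d e1 e2 e3 hao hbo hco hdo hd0 heq hTe
  have hpe : a*e1+b*e2+c*e3 = 0 := hTe.1
  have hpf : a*f1+b*f2+c*f3 = 0 := hTf.1
  have hNe : e1^2+e2^2+e3^2 = g := hge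
  have hNf : f1^2+f2^2+f3^2 = g := hnf.trans hge
  have hs : 2*(e1*f1+e2*f2+e3*f3) = -g := by rw [hef, hge]
  obtain ⟨τ, hτ1, hτ2, hτ3⟩ :=
    cross_parallel a b c p0 q0 r0 e1 e2 e3 f1 f2 f3 hbez hpe hpf
  have hlag : 4*((e2*f3 - e3*f2)^2 + (e3*f1 - e1*f3)^2 + (e1*f2 - e2*f1)^2) = 3*g^2 := by
    linear_combination (4*(f1^2+f2^2+f3^2))*hNe + (4*g)*hNf
      - (2*(e1*f1+e2*f2+e3*f3) - g)*hs
  have hc2 : (e2*f3-e3*f2)^2 + (e3*f1-e1*f3)^2 + (e1*f2-e2*f1)^2 = 3*(d^2)*τ^2 := by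
    linear_combination (e2*f3-e3*f2 + τ*a)*hτ1 + (e3*f1-e1*f3 + τ*b)*hτ2
      + (e1*f2-e2*f1 + τ*c)*hτ3 + τ^2*heq
  have hg2 : g^2 = 4*d^2*τ^2 := by linarith [hlag, hc2]
  have hτ0 : τ ≠ 0 := by
    intro h0
    rw [h0] at hg2
    simp at hg2
    have : (0:ℤ) < g^2 := by positivity
    omega
  have hcne : e2*f3 - e3*f2 ≠ 0 := by
    intro h0
    exact (mul_ne_zero hτ0 ha0) (hτ1.symm.trans h0)
  -- scaled representation of any plane vector
  have hrepτ : ∀ x y z : ℤ, a*x+b*y+c*z = 0 →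
      ∃ μ ν : ℤ, τ*x = μ*e1 + ν*f1 ∧ τ*y = μ*e2 + ν*f2 ∧ τ*z = μ*e3 + ν*f3 := by
    intro x y z hpx
    obtain ⟨μ, hμ1, hμ2, hμ3⟩ :=
      cross_parallel a b c p0 q0 r0 x y z f1 f2 f3 hbez hpx hpf
    obtain ⟨ν, hν1, hν2, hν3⟩ :=
      cross_parallel a b c p0 q0 r0 e1 e2 e3 x y z hbez hpe hpx
    have E1 : (τ*y - μ*e2 - ν*f2)*e3 - (τ*z - μ*e3 - ν*f3)*e2 = 0 := by
      linear_combination (-τ)*hν1 + ν*hτ1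
    have E2 : (τ*z - μ*e3 - ν*f3)*e1 - (τ*x - μ*e1 - ν*f1)*e3 = 0 := by
      linear_combination (-τ)*hν2 + ν*hτ2
    have E3 : (τ*x - μ*e1 - ν*f1)*e2 - (τ*y - μ*e2 - ν*f2)*e1 = 0 := by
      linear_combination (-τ)*hν3 + ν*hτ3
    have F1 : (τ*y - μ*e2 - ν*f2)*f3 - (τ*z - μ*e3 - ν*f3)*f2 = 0 := by
      linear_combination τ*hμ1 - μ*hτ1
    have F2 : (τ*z - μ*e3 - ν*f3)*f1 - (τ*x - μ*e1 - ν*f1)*f3 = 0 := by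
      linear_combination τ*hμ2 - μ*hτ2
    have F3 : (τ*x - μ*e1 - ν*f1)*f2 - (τ*y - μ*e2 - ν*f2)*f1 = 0 := by
      linear_combination τ*hμ3 - μ*hτ3
    obtain ⟨hzx, hzy, hzz⟩ := collinear e1 e2 e3 f1 f2 f3 _ _ _ hcne E1 E2 E3 F1 F2 F3
    exact ⟨μ, ν, by linarith [hzx], by linarith [hzy], by linarith [hzz]⟩
  -- exact representation of lattice vectors
  have hrep : ∀ x y z : ℤ, InT a b c d x y z →
      ∃ m n : ℤ, x = m*e1 + n*f1 ∧ y = m*e2 + n*f2 ∧ z = m*e3 + n*f3 := by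
    intro x y z hXT
    obtain ⟨μ, ν, hr1, hr2, hr3⟩ := hrepτ x y z hXT.1
    obtain ⟨m, r1, hm, hr1b⟩ := round_near μ τ hτ0
    obtain ⟨n, r2, hn, hr2b⟩ := round_near ν τ hτ0
    have hTX' : InT a b c d (x - (m*e1 + n*f1)) (y - (m*e2+n*f2)) (z - (m*e3+n*f3)) := by
      have hcomb := InT_comb a b c d m n e1 e2 e3 f1 f2 f3 hTe hTf
      have hcomb2 := InT_comb a b c d 1 (-1) x y z _ _ _ hXT hcomb
      exact InT_congr hcomb2 (by ring) (by ring) (by ring)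
    have hτX1 : τ*(x - (m*e1+n*f1)) = r1*e1 + r2*f1 := by
      linear_combination hr1 + e1*hm + f1*hn
    have hτX2 : τ*(y - (m*e2+n*f2)) = r1*e2 + r2*f2 := by
      linear_combination hr2 + e2*hm + f2*hn
    have hτX3 : τ*(z - (m*e3+n*f3)) = r1*e3 + r2*f3 := by
      linear_combination hr3 + e3*hm + f3*hn
    have hnormX' : τ^2*((x - (m*e1+n*f1))^2 + (y-(m*e2+n*f2))^2 + (z-(m*e3+n*f3))^2)
        = g*(r1^2 - r1*r2 + r2^2) := by
      linear_combination (τ*(x-(m*e1+n*f1)) + r1*e1+r2*f1)*hτX1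
        + (τ*(y-(m*e2+n*f2)) + r1*e2+r2*f2)*hτX2
        + (τ*(z-(m*e3+n*f3)) + r1*e3+r2*f3)*hτX3
        + r1^2*hNe + r2^2*hNf + (r1*r2)*hs
    have hground : 4*(r1^2 - r1*r2 + r2^2) ≤ 3*τ^2 := by
      linarith [hr1b, hr2b, sq_nonneg (r1+r2)]
    have hX'0 : (x - (m*e1+n*f1)) = 0 ∧ (y - (m*e2+n*f2)) = 0 ∧ (z - (m*e3+n*f3)) = 0 := by
      by_contra hcon
      have hge' := hmin _ _ _ hTX' hcon
      have hτsq : 0 < τ^2 := by positivity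
      exact descent_arith hnormX' hground hgpos hτsq hge'
    exact ⟨m, n, by linarith [hX'0.1], by linarith [hX'0.2.1], by linarith [hX'0.2.2]⟩
  -- d divides τ
  have hdτ : d ∣ τ := by
    have hpx0 : a*(b*r0 - c*q0) + b*(c*p0 - a*r0) + c*(a*q0 - b*p0) = 0 := by ring
    obtain ⟨μ, ν, hr1, hr2, hr3⟩ := hrepτ _ _ _ hpx0
    have hTτX : InT a b c d (τ*(b*r0 - c*q0)) (τ*(c*p0 - a*r0)) (τ*(a*q0 - b*p0)) := by
      have hcomb := InT_comb a b c d μ ν e1 e2 e3 f1 f2 f3 hTe hTf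
      exact InT_congr hcomb hr1.symm hr2.symm hr3.symm
    obtain ⟨_, hdv1, hdv2, hdv3⟩ := hTτX
    have key1 : b*(τ*(a*q0 - b*p0)) - c*(τ*(c*p0 - a*r0)) = τ*a - d*(d*(3*τ*p0)) := by
      linear_combination (τ*a)*hbez - (τ*p0)*heq
    have key2 : c*(τ*(b*r0 - c*q0)) - a*(τ*(a*q0 - b*p0)) = τ*b - d*(d*(3*τ*q0)) := by
      linear_combination (τ*b)*hbez - (τ*q0)*heq
    have key3 : a*(τ*(c*p0 - a*r0)) - b*(τ*(b*r0 - c*q0)) = τ*c - d*(d*(3*τ*r0)) := by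
      linear_combination (τ*c)*hbez - (τ*r0)*heq
    have hda : d ∣ τ*a := by
      have h' := hdv1
      rw [key1] at h'
      have := dvd_add h' (dvd_mul_right d (d*(3*τ*p0)))
      simpa using this
    have hdb : d ∣ τ*b := by
      have h' := hdv2
      rw [key2] at h'
      have := dvd_add h' (dvd_mul_right d (d*(3*τ*q0)))
      simpa using this
    have hdc : d ∣ τ*c := by
      have h' := hdv3
      rw [key3] at h'
      have := dvd_add h' (dvd_mul_right d (d*(3*τ*r0)))
      simpa using this
    exact dvd3 a b c d τ hgcd hda hdb hdc
  -- cross of two lattice vectors is a multiple of τ*A (first component)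
  have hcross1 : ∀ x y z X Y Z : ℤ, InT a b c d x y z → InT a b c d X Y Z →
      ∃ k : ℤ, y*Z - z*Y = k*(τ*a) := by
    intro x y z X Y Z h1 h2
    obtain ⟨m, n, hx, hy, hz⟩ := hrep x y z h1
    obtain ⟨m', n', hX, hY, hZ⟩ := hrep X Y Z h2
    refine ⟨m*n' - n*m', ?_⟩
    linear_combination Z*hy + (m*e2+n*f2)*hZ - Y*hz - (m*e3+n*f3)*hY + (m*n'-n*m')*hτ1
  -- the special lattice vectors
  have hG1 : InT a b c d (-(b^2)-c^2) (a*b) (a*c) := by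
    refine ⟨by ring, ⟨0, by ring⟩, ⟨-(3*c*d), by linear_combination (-c)*heq⟩,
      ⟨3*b*d, by linear_combination b*heq⟩⟩
  have hD1 : InT a b c d 0 (c*d) (-(b*d)) :=
    ⟨by ring, ⟨-(b^2)-c^2, by ring⟩, ⟨a*b, by ring⟩, ⟨a*c, by ring⟩⟩
  have hG2 : InT a b c d (a*b) (-(a^2)-c^2) (b*c) := by
    refine ⟨by ring, ⟨3*c*d, by linear_combination c*heq⟩, ⟨0, by ring⟩,
      ⟨-(3*a*d), by linear_combination (-a)*heq⟩⟩
  have hD2 : InT a b c d (-(c*d)) 0 (a*d) :=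
    ⟨by ring, ⟨a*b, by ring⟩, ⟨-(a^2)-c^2, by ring⟩, ⟨b*c, by ring⟩⟩
  have hG3 : InT a b c d (a*c) (b*c) (-(a^2)-b^2) := by
    refine ⟨by ring, ⟨-(3*b*d), by linear_combination (-b)*heq⟩,
      ⟨3*a*d, by linear_combination a*heq⟩, ⟨0, by ring⟩⟩
  have hD3 : InT a b c d (b*d) (-(a*d)) 0 :=
    ⟨by ring, ⟨a*c, by ring⟩, ⟨b*c, by ring⟩, ⟨-(a^2)-b^2, by ring⟩⟩
  -- divisibilities of τ
  obtain ⟨k1, hk1⟩ := hcross1 _ _ _ _ _ _ hG1 hD1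
  obtain ⟨k2, hk2⟩ := hcross1 _ _ _ _ _ _ hG2 hD2
  obtain ⟨k3, hk3⟩ := hcross1 _ _ _ _ _ _ hG3 hD3
  obtain ⟨k4, hk4⟩ := hcross1 _ _ _ _ _ _ hG1 hD2
  have ht1 : τ ∣ d*(b^2+c^2) := by
    refine ⟨-k1, ?_⟩
    have h' : a*(d*(b^2+c^2)) = a*(τ*(-k1)) := by linear_combination (-1)*hk1
    exact cancel ha0 h'
  have ht2 : τ ∣ d*(a^2+c^2) := by
    refine ⟨-k2, ?_⟩
    have h' : a*(d*(a^2+c^2)) = a*(τ*(-k2)) := by linear_combination (-1)*hk2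
    exact cancel ha0 h'
  have ht3 : τ ∣ d*(a^2+b^2) := by
    refine ⟨-k3, ?_⟩
    have h' : a*(d*(a^2+b^2)) = a*(τ*(-k3)) := by linear_combination (-1)*hk3
    exact cancel ha0 h'
  have ht4 : τ ∣ d*(a*b) := by
    refine ⟨k4, ?_⟩
    have h' : a*(d*(a*b)) = a*(τ*k4) := by linear_combination hk4
    exact cancel ha0 h'
  -- ρ = τ/d is a unit
  obtain ⟨ρ, hρ⟩ := hdτ
  have hdvd_cancel : ∀ M : ℤ, τ ∣ d*M → ρ ∣ M := by
    intro M hM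
    obtain ⟨k, hk⟩ := hM
    refine ⟨k, cancel hd0 ?_⟩
    rw [hρ] at hk
    linear_combination hk
  have hρ1 : ρ ∣ b^2+c^2 := hdvd_cancel _ ht1
  have hρ2 : ρ ∣ a^2+c^2 := hdvd_cancel _ ht2
  have hρ3 : ρ ∣ a^2+b^2 := hdvd_cancel _ ht3
  have hρ4 : ρ ∣ a*b := hdvd_cancel _ ht4
  have hρu : ρ.natAbs = 1 := by
    by_contra hne1
    obtain ⟨q, hq, hqdvd⟩ := Nat.exists_prime_and_dvd hne1
    have hq1 : (q:ℤ) ∣ ρ := Int.dvd_natAbs.mp (Int.natCast_dvd_natCast.mpr hqdvd)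
    have hqp : Prime (q:ℤ) := Nat.prime_iff_prime_int.mp hq
    have hqab : (q:ℤ) ∣ a*b := hq1.trans hρ4
    have hqa_and_b : (q:ℤ) ∣ a ∧ (q:ℤ) ∣ b := by
      rcases hqp.dvd_mul.mp hqab with hqa | hqb
      · have hqb2 : (q:ℤ) ∣ b*b := by
          have h1 : (q:ℤ) ∣ a^2+b^2 := hq1.trans hρ3
          have h2 : (q:ℤ) ∣ a*a := hqa.mul_right a
          have h3 := dvd_sub h1 h2
          have h4 : a^2+b^2 - a*a = b*b := by ring
          rwa [h4] at h3
        exact ⟨hqa, (hqp.dvd_mul.mp hqb2).elim id id⟩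
      · have hqa2 : (q:ℤ) ∣ a*a := by
          have h1 : (q:ℤ) ∣ a^2+b^2 := hq1.trans hρ3
          have h2 : (q:ℤ) ∣ b*b := hqb.mul_right b
          have h3 := dvd_sub h1 h2
          have h4 : a^2+b^2 - b*b = a*a := by ring
          rwa [h4] at h3
        exact ⟨(hqp.dvd_mul.mp hqa2).elim id id, hqb⟩
    obtain ⟨hqa, hqb⟩ := hqa_and_b
    have hqc : (q:ℤ) ∣ c := by
      have h1 : (q:ℤ) ∣ b^2+c^2 := hq1.trans hρ1
      have h2 : (q:ℤ) ∣ b*b := hqb.mul_right b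
      have h3 := dvd_sub h1 h2
      have h4 : b^2+c^2 - b*b = c*c := by ring
      rw [h4] at h3
      exact (hqp.dvd_mul.mp h3).elim id id
    have hqan : q ∣ a.natAbs := Int.natAbs_dvd_natAbs.mpr (by simpa using hqa)
    have hqbn : q ∣ b.natAbs := Int.natAbs_dvd_natAbs.mpr (by simpa using hqb)
    have hqcn : q ∣ c.natAbs := Int.natAbs_dvd_natAbs.mpr (by simpa using hqc)
    have hgbc : q ∣ Int.gcd b c := Nat.dvd_gcd hqbn hqcn
    have hgabc : q ∣ Int.gcd a (Int.gcd b c) := by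
      have : q ∣ ((Int.gcd b c : ℤ)).natAbs := by simpa using hgbc
      exact Nat.dvd_gcd hqan this
    rw [hgcd] at hgabc
    exact hq.one_lt.ne' (Nat.dvd_one.mp hgabc)
  have hτd : τ = d ∨ τ = -d := by
    rcases Int.natAbs_eq_iff.mp hρu with h | h
    · left; rw [hρ, h]; ring
    · right; rw [hρ, h]; ring
  have hτ2d : τ^2 = d^2 := by rcases hτd with h | h <;> rw [h] <;> ring
  have hgeq : g = 2*d^2 := by
    have hfac : (g - 2*d^2)*(g + 2*d^2) = 0 := by
      linear_combination hg2 + 4*d^2*hτ2d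
    rcases mul_eq_zero.mp hfac with h | h
    · linarith
    · linarith [hgpos, sq_nonneg d, h]
  obtain ⟨α, β, hα1, hα2, hα3⟩ := hrep u v w hT
  refine ⟨α, β, ?_⟩
  linear_combination (u + (α*e1+β*f1))*hα1 + (v + (α*e2+β*f2))*hα2 + (w + (α*e3+β*f3))*hα3
    + α^2*hNe + β^2*hNf + (α*β)*hs + (α^2-α*β+β^2)*hgeq

lemma dvd_of_sq_eq {d t v : ℤ} (hd : d ∣ t) (h : v^2 = t^2) : d ∣ v := by
  have hfac : (v - t)*(v + t) = 0 := by linear_combination h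
  rcases mul_eq_zero.mp hfac with h' | h'
  · have : v = t := by linarith
    rw [this]; exact hd
  · have : v = -t := by linarith
    rw [this]; exact hd.neg_right

end SideLen

open SideLen in
/-- The squared side length of any equilateral triangle in the
plane `aα + bβ + cγ = 0` with a vertex at the origin has the form
`2d²(α² − αβ + β²)` for some integers `α, β`. -/
theorem side_length_form
    (a b c d : ℤ)
    (ha : 0 < a) (hb : 0 < b) (hc : 0 < c) (hd : 0 < d)
    (hao : Odd a) (hbo : Odd b) (hco : Odd c) (hdo : Odd d)
    (heq : a ^ 2 + b ^ 2 + c ^ 2 = 3 * d ^ 2)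
    (hgcd : Int.gcd a (Int.gcd b c) = 1)
    (u₀ v₀ w₀ x₀ y₀ z₀ : ℤ)
    (hP : ((u₀, v₀, w₀) : ℤ × ℤ × ℤ) ≠ (0, 0, 0))
    (hQ : ((x₀, y₀, z₀) : ℤ × ℤ × ℤ) ≠ (0, 0, 0))
    (hPQ : ((u₀, v₀, w₀) : ℤ × ℤ × ℤ) ≠ (x₀, y₀, z₀))
    (hplaneP : a * u₀ + b * v₀ + c * w₀ = 0)
    (hplaneQ : a * x₀ + b * y₀ + c * z₀ = 0)
    (heq1 : u₀ ^ 2 + v₀ ^ 2 + w₀ ^ 2 = x₀ ^ 2 + y₀ ^ 2 + z₀ ^ 2)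
    (heq2 : u₀ ^ 2 + v₀ ^ 2 + w₀ ^ 2 =
      (u₀ - x₀) ^ 2 + (v₀ - y₀) ^ 2 + (w₀ - z₀) ^ 2) :
    ∃ α β : ℤ, u₀ ^ 2 + v₀ ^ 2 + w₀ ^ 2 = 2 * d ^ 2 * (α ^ 2 - α * β + β ^ 2) := by
  have hP' : ¬(u₀ = 0 ∧ v₀ = 0 ∧ w₀ = 0) := by
    rintro ⟨h1, h2, h3⟩
    exact hP (by simp [h1, h2, h3])
  have hNpos : 0 < u₀^2+v₀^2+w₀^2 := norm_pos u₀ v₀ w₀ hP'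
  have hdot : 2*(u₀*x₀+v₀*y₀+w₀*z₀) = u₀^2+v₀^2+w₀^2 := by
    linear_combination heq2 - heq1
  -- T := d•(2Q − P),  V := P × A
  have hcr1 : (d*(2*y₀-v₀))*(u₀*b - v₀*a) - (d*(2*z₀-w₀))*(w₀*a - u₀*c) = 0 := by
    linear_combination (2*d*u₀)*hplaneQ - (d*u₀)*hplaneP - (a*d)*hdot
  have hcr2 : (d*(2*z₀-w₀))*(v₀*c - w₀*b) - (d*(2*x₀-u₀))*(u₀*b - v₀*a) = 0 := by
    linear_combination (2*d*v₀)*hplaneQ - (d*v₀)*hplaneP - (b*d)*hdot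
  have hcr3 : (d*(2*x₀-u₀))*(w₀*a - u₀*c) - (d*(2*y₀-v₀))*(v₀*c - w₀*b) = 0 := by
    linear_combination (2*d*w₀)*hplaneQ - (d*w₀)*hplaneP - (c*d)*hdot
  have hVnorm : (v₀*c - w₀*b)^2 + (w₀*a - u₀*c)^2 + (u₀*b - v₀*a)^2
      = 3*d^2*(u₀^2+v₀^2+w₀^2) := by
    linear_combination (u₀^2+v₀^2+w₀^2)*heq - (a*u₀+b*v₀+c*w₀)*hplaneP
  have hTnorm : (d*(2*x₀-u₀))^2 + (d*(2*y₀-v₀))^2 + (d*(2*z₀-w₀))^2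
      = 3*d^2*(u₀^2+v₀^2+w₀^2) := by
    linear_combination (-(4*d^2))*heq1 - (2*d^2)*hdot
  have hn : (d*(2*x₀-u₀))^2 + (d*(2*y₀-v₀))^2 + (d*(2*z₀-w₀))^2
      = (v₀*c - w₀*b)^2 + (w₀*a - u₀*c)^2 + (u₀*b - v₀*a)^2 := by
    rw [hTnorm, hVnorm]
  have hVpos : 0 < (v₀*c - w₀*b)^2 + (w₀*a - u₀*c)^2 + (u₀*b - v₀*a)^2 := by
    rw [hVnorm]; positivity
  have hVne : (v₀*c - w₀*b)^2 + (w₀*a - u₀*c)^2 + (u₀*b - v₀*a)^2 ≠ 0 := ne_of_gt hVpos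
  -- component squares agree
  have sq1 : (v₀*c - w₀*b)^2 = (d*(2*x₀-u₀))^2 := by
    have key : (v₀*c - w₀*b)^2*((d*(2*x₀-u₀))^2 + (d*(2*y₀-v₀))^2 + (d*(2*z₀-w₀))^2)
        = (d*(2*x₀-u₀))^2*((v₀*c - w₀*b)^2 + (w₀*a - u₀*c)^2 + (u₀*b - v₀*a)^2) := by
      linear_combination ((d*(2*z₀-w₀))*(v₀*c - w₀*b) + (d*(2*x₀-u₀))*(u₀*b - v₀*a))*hcr2
        - ((d*(2*x₀-u₀))*(w₀*a - u₀*c) + (d*(2*y₀-v₀))*(v₀*c - w₀*b))*hcr3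
    have hfac : ((v₀*c - w₀*b)^2 - (d*(2*x₀-u₀))^2)
        * ((v₀*c - w₀*b)^2 + (w₀*a - u₀*c)^2 + (u₀*b - v₀*a)^2) = 0 := by
      linear_combination key - (v₀*c - w₀*b)^2*hn
    have := (mul_eq_zero.mp hfac).resolve_right hVne
    linarith
  have sq2 : (w₀*a - u₀*c)^2 = (d*(2*y₀-v₀))^2 := by
    have key : (w₀*a - u₀*c)^2*((d*(2*x₀-u₀))^2 + (d*(2*y₀-v₀))^2 + (d*(2*z₀-w₀))^2)
        = (d*(2*y₀-v₀))^2*((v₀*c - w₀*b)^2 + (w₀*a - u₀*c)^2 + (u₀*b - v₀*a)^2) := by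
      linear_combination ((d*(2*x₀-u₀))*(w₀*a - u₀*c) + (d*(2*y₀-v₀))*(v₀*c - w₀*b))*hcr3
        - ((d*(2*y₀-v₀))*(u₀*b - v₀*a) + (d*(2*z₀-w₀))*(w₀*a - u₀*c))*hcr1
    have hfac : ((w₀*a - u₀*c)^2 - (d*(2*y₀-v₀))^2)
        * ((v₀*c - w₀*b)^2 + (w₀*a - u₀*c)^2 + (u₀*b - v₀*a)^2) = 0 := by
      linear_combination key - (w₀*a - u₀*c)^2*hn
    have := (mul_eq_zero.mp hfac).resolve_right hVne
    linarith
  have sq3 : (u₀*b - v₀*a)^2 = (d*(2*z₀-w₀))^2 := by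
    have key : (u₀*b - v₀*a)^2*((d*(2*x₀-u₀))^2 + (d*(2*y₀-v₀))^2 + (d*(2*z₀-w₀))^2)
        = (d*(2*z₀-w₀))^2*((v₀*c - w₀*b)^2 + (w₀*a - u₀*c)^2 + (u₀*b - v₀*a)^2) := by
      linear_combination ((d*(2*y₀-v₀))*(u₀*b - v₀*a) + (d*(2*z₀-w₀))*(w₀*a - u₀*c))*hcr1
        - ((d*(2*z₀-w₀))*(v₀*c - w₀*b) + (d*(2*x₀-u₀))*(u₀*b - v₀*a))*hcr2
    have hfac : ((u₀*b - v₀*a)^2 - (d*(2*z₀-w₀))^2)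
        * ((v₀*c - w₀*b)^2 + (w₀*a - u₀*c)^2 + (u₀*b - v₀*a)^2) = 0 := by
      linear_combination key - (u₀*b - v₀*a)^2*hn
    have := (mul_eq_zero.mp hfac).resolve_right hVne
    linarith
  have hd1 : d ∣ (v₀*c - w₀*b) := dvd_of_sq_eq (Dvd.intro _ rfl) sq1
  have hd2 : d ∣ (w₀*a - u₀*c) := dvd_of_sq_eq (Dvd.intro _ rfl) sq2
  have hd3 : d ∣ (u₀*b - v₀*a) := dvd_of_sq_eq (Dvd.intro _ rfl) sq3
  have hT : InT a b c d u₀ v₀ w₀ := by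
    refine ⟨hplaneP, ?_, ?_, ?_⟩
    · have e : b*w₀ - c*v₀ = -(v₀*c - w₀*b) := by ring
      rw [e]; exact hd1.neg_right
    · have e : c*u₀ - a*w₀ = -(w₀*a - u₀*c) := by ring
      rw [e]; exact hd2.neg_right
    · have e : a*v₀ - b*u₀ = -(u₀*b - v₀*a) := by ring
      rw [e]; exact hd3.neg_right
  obtain ⟨α, β, hfin⟩ := main_lemma a b c d ha hd hao hbo hco hdo (by linarith [heq]) hgcd
    u₀ v₀ w₀ hP' hT
  exact ⟨α, β, by linarith [hfin]⟩
end

section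
/- Let a, b, c, d be odd positive integers with a² + b² + c² = 3d² and gcd(a,b,c) = 1, set q = a² + b² and ζ = gcd(d, c). Then there exist integers r, s with s² + 3r² = 2q, ζ ∣ r, ζ ∣ s, and such that all twelve quantities m_x = −[db(3r+s) + ac(r−s)]/(2q), n_x = −(rac + dbs)/q, m_y = [da(3r+s) − bc(r−s)]/(2q), n_y = (das − bcr)/q, m_z = (r−s)/2, n_z = r, m_u = −(rac + dbs)/q, n_u = −[db(s−3r) + ac(r+s)]/(2q), m_v = (das − rbc)/q, n_v = [da(s−3r) − bc(r+s)]/(2q), m_w = r, n_w = (r+s)/2 are integers. -/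
private lemma odd_sq_mod8 (u : ℤ) (h : Odd u) : u ^ 2 % 8 = 1 := by
  obtain ⟨k, hk⟩ := h
  obtain ⟨m, hm⟩ := Int.even_mul_succ_self k
  have h2 : u ^ 2 = 8 * m + 1 := by rw [hk]; linear_combination 4 * hm
  rw [h2]; omega

private lemma no_two_mod_four (x y n : ℤ) (hn : n % 4 = 2) (h : x ^ 2 + 3 * y ^ 2 = n) :
    False := by
  have key : ∀ u v : ZMod 4, u ^ 2 + 3 * v ^ 2 ≠ 2 := by decide
  apply key (x : ZMod 4) (y : ZMod 4)
  obtain ⟨j, hj⟩ : ∃ j, n = 4 * j + 2 := ⟨n / 4, by omega⟩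
  have hcast : ((x ^ 2 + 3 * y ^ 2 : ℤ) : ZMod 4) = ((4 * j + 2 : ℤ) : ZMod 4) := by
    rw [h, hj]
  push_cast at hcast
  rw [hcast, show ((4 : ZMod 4)) = 0 by decide]
  ring

private lemma round_exists (B F : ℤ) (hF : 0 < F) : ∃ k : ℤ, 2 * |B - k * F| ≤ F := by
  refine ⟨(2 * B + F) / (2 * F), ?_⟩
  have h2F : (0:ℤ) < 2 * F := by linarith
  have hmod := Int.emod_nonneg (2 * B + F) (by linarith : (2 * F) ≠ 0)
  have hmod2 := Int.emod_lt_of_pos (2 * B + F) h2F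
  have hdiv := Int.mul_ediv_add_emod (2 * B + F) (2 * F)
  have key : 2 * (B - ((2 * B + F) / (2 * F)) * F) = (2 * B + F) % (2 * F) - F := by
    linear_combination -hdiv
  have habs : |2 * (B - ((2 * B + F) / (2 * F)) * F)| ≤ F := by
    rw [key, abs_le]
    constructor <;> omega
  calc 2 * |B - ((2 * B + F) / (2 * F)) * F|
      = |2 * (B - ((2 * B + F) / (2 * F)) * F)| := by rw [abs_mul]; norm_num
    _ ≤ F := habs

private lemma two_q_dvd (m X : ℤ) (hm : m % 4 = 2) (h4 : (4:ℤ) ∣ X) (hq : m ∣ X) :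
    2 * m ∣ X := by
  obtain ⟨j, hj⟩ : ∃ j, m = 2 * (2 * j + 1) := ⟨(m - 2) / 4, by omega⟩
  obtain ⟨u, hu⟩ := h4
  obtain ⟨w, hw⟩ := hq
  have h1 : (2:ℤ) * (2 * u) = 2 * ((2 * j + 1) * w) := by
    linear_combination (-1) * hu + hw + w * hj
  have h2u : 2 * u = (2 * j + 1) * w := mul_left_cancel₀ two_ne_zero h1
  have hcop : IsCoprime ((2:ℤ) * j + 1) 2 := ⟨1, -j, by ring⟩
  have hdvd2u : (2 * j + 1 : ℤ) ∣ 2 * u := ⟨w, h2u⟩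
  have hk_dvd_u : (2 * j + 1 : ℤ) ∣ u := hcop.dvd_of_dvd_mul_left hdvd2u
  obtain ⟨w2, hw2⟩ := hk_dvd_u
  exact ⟨w2, by linear_combination hu + 4 * hw2 + (-2 * w2) * hj⟩

private lemma four_dvd_gen1 (P Q r s : ℤ) (hP : Odd P) (hQ : Odd Q) (h : Even (r - s)) :
    (4:ℤ) ∣ P * (3 * r + s) + Q * (r - s) := by
  obtain ⟨p, hp⟩ := hP
  obtain ⟨qq, hq⟩ := hQ
  obtain ⟨e, he⟩ := h
  exact ⟨P * r + (qq - p) * e,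
    by linear_combination (-(r - s)) * hp + (r - s) * hq + (2 * (qq - p)) * he⟩

private lemma four_dvd_gen2 (P Q r s : ℤ) (hP : Odd P) (hQ : Odd Q) (h : Even (r + s)) :
    (4:ℤ) ∣ P * (s - 3 * r) + Q * (r + s) := by
  obtain ⟨p, hp⟩ := hP
  obtain ⟨qq, hq⟩ := hQ
  obtain ⟨e, he⟩ := h
  exact ⟨-(P * r) + (p + qq + 1) * e,
    by linear_combination (r + s) * hp + (r + s) * hq + (2 * (p + qq + 1)) * he⟩

private lemma even_add_of_eq (r s m : ℤ) (h : s ^ 2 + 3 * r ^ 2 = 2 * m) : Even (r + s) := by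
  rcases Int.even_or_odd r with hr | hr <;> rcases Int.even_or_odd s with hs | hs
  · exact hr.add hs
  · exfalso
    obtain ⟨w, hw⟩ := hr
    obtain ⟨v, hv⟩ := hs
    rw [hw, hv] at h
    obtain ⟨K, hK⟩ : ∃ K, 2 * K + 1 = 2 * m := ⟨2 * v ^ 2 + 2 * v + 6 * w ^ 2, by linear_combination h⟩
    omega
  · exfalso
    obtain ⟨w, hw⟩ := hr
    obtain ⟨v, hv⟩ := hs
    rw [hw, hv] at h
    obtain ⟨K, hK⟩ : ∃ K, 2 * K + 3 = 2 * m := ⟨2 * v ^ 2 + 6 * w ^ 2 + 6 * w, by linear_combination h⟩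
    omega
  · exact hr.add_odd hs

private lemma coprime_of_sq (X Y Q : ℤ) (hXY : Int.gcd X Y = 1)
    (hdvd : ((Int.gcd Y Q : ℤ)) ∣ X ^ 2) : IsCoprime Y Q := by
  rw [Int.isCoprime_iff_gcd_eq_one]
  have hc : IsCoprime (X ^ 2) Y := (Int.isCoprime_iff_gcd_eq_one.mpr hXY).pow_left
  have h2 : Int.gcd (X ^ 2) Y = 1 := Int.isCoprime_iff_gcd_eq_one.mp hc
  have h1 : ((Int.gcd Y Q : ℤ)) ∣ ((Int.gcd (X ^ 2) Y : ℤ)) :=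
    Int.dvd_coe_gcd hdvd (Int.gcd_dvd_left _ _)
  rw [h2] at h1
  have h3 : Int.gcd Y Q ∣ 1 := by exact_mod_cast h1
  exact Nat.dvd_one.mp h3

private lemma aux_step_lt (F₁ F₂ F₂' B B' nsq : ℤ) (hF₁pos : 0 < F₁)
    (hdet : F₁ * F₂ = B ^ 2 + nsq) (hdet' : F₁ * F₂' = B' ^ 2 + nsq)
    (hBB : B' ^ 2 < B ^ 2) : F₂' < F₂ := by
  have hm : F₁ * F₂' < F₁ * F₂ := by rw [hdet, hdet']; linarith
  exact lt_of_mul_lt_mul_left hm hF₁pos.le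

private lemma aux_bound (F₁ F₂ B nval : ℤ) (h1 : 0 < F₁) (hle : F₁ ≤ F₂)
    (hdet : F₁ * F₂ = B ^ 2 + 3 * nval ^ 2) (hsmall : 2 * |B| ≤ F₁) (hn : 0 < nval) :
    F₁ ≤ 2 * nval := by
  have h0 : (0:ℤ) ≤ 2 * |B| := by positivity
  have hb2 : 4 * B ^ 2 ≤ F₁ ^ 2 := by
    nlinarith [sq_abs B, mul_self_le_mul_self h0 hsmall]
  have hquad : F₁ ^ 2 ≤ 4 * nval ^ 2 := by
    nlinarith [mul_le_mul_of_nonneg_left hle h1.le]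
  nlinarith [hquad, h1, hn]

private lemma aux_kval (F n k : ℤ) (hF : 0 < F) (hn : 0 < n) (hub : F ≤ 2 * n)
    (hk : F = n * k) : k = 1 ∨ k = 2 := by
  have h1 : 0 < k := by nlinarith
  have h2 : k ≤ 2 := by nlinarith
  omega

set_option maxHeartbeats 1000000 in
private lemma reduceLoop (n t : ℤ) (hn : 0 < n) (h2 : n % 4 = 2) (ht : n ∣ t ^ 2 + 3) :
    ∀ N : ℕ, ∀ x₁ y₁ x₂ y₂ : ℤ,
      n ∣ x₁ - t * y₁ → n ∣ x₂ - t * y₂ →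
      (x₁ * y₂ - x₂ * y₁) ^ 2 = n ^ 2 →
      x₁ ^ 2 + 3 * y₁ ^ 2 ≤ x₂ ^ 2 + 3 * y₂ ^ 2 →
      (x₁ ^ 2 + 3 * y₁ ^ 2 + (x₂ ^ 2 + 3 * y₂ ^ 2)).toNat ≤ N →
      ∃ x y : ℤ, x ^ 2 + 3 * y ^ 2 = 2 * n ∧ n ∣ x - t * y := by
  intro N
  induction N using Nat.strong_induction_on with
  | _ N IH =>
  intro x₁ y₁ x₂ y₂ h₁ h₂ hcross hle hN
  have hF₁pos : 0 < x₁ ^ 2 + 3 * y₁ ^ 2 := by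
    rcases lt_or_ge 0 (x₁ ^ 2 + 3 * y₁ ^ 2) with h | h
    · exact h
    · exfalso
      have hx2 : x₁ ^ 2 ≤ 0 := by nlinarith [sq_nonneg y₁]
      have hy2 : y₁ ^ 2 ≤ 0 := by nlinarith [sq_nonneg x₁]
      have hx1 : x₁ = 0 := pow_eq_zero_iff two_ne_zero |>.mp (le_antisymm hx2 (sq_nonneg x₁))
      have hy1 : y₁ = 0 := pow_eq_zero_iff two_ne_zero |>.mp (le_antisymm hy2 (sq_nonneg y₁))
      have h0 : (0 : ℤ) = n ^ 2 := by rw [← hcross, hx1, hy1]; ring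
      linarith [pow_pos hn 2]
  have hdet : (x₁ ^ 2 + 3 * y₁ ^ 2) * (x₂ ^ 2 + 3 * y₂ ^ 2)
      = (x₁ * x₂ + 3 * y₁ * y₂) ^ 2 + 3 * n ^ 2 := by
    rw [← hcross]; ring
  by_cases hsmall : 2 * |x₁ * x₂ + 3 * y₁ * y₂| ≤ x₁ ^ 2 + 3 * y₁ ^ 2
  · have hnF : n ∣ x₁ ^ 2 + 3 * y₁ ^ 2 := by
      have hid : x₁ ^ 2 + 3 * y₁ ^ 2 = (x₁ - t * y₁) * (x₁ + t * y₁) + y₁ ^ 2 * (t ^ 2 + 3) := by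
        ring
      rw [hid]
      exact dvd_add (h₁.mul_right _) (ht.mul_left _)
    have hub : x₁ ^ 2 + 3 * y₁ ^ 2 ≤ 2 * n :=
      aux_bound _ _ _ _ hF₁pos hle hdet hsmall hn
    obtain ⟨k, hk⟩ := hnF
    have hk12 : k = 1 ∨ k = 2 := aux_kval _ _ _ hF₁pos hn hub hk
    rcases hk12 with h | h
    · exfalso
      exact no_two_mod_four x₁ y₁ n h2 (by rw [hk, h]; ring)
    · exact ⟨x₁, y₁, by rw [hk, h]; ring, h₁⟩
  · push_neg at hsmall
    obtain ⟨k, hk⟩ := round_exists (x₁ * x₂ + 3 * y₁ * y₂) (x₁ ^ 2 + 3 * y₁ ^ 2) hF₁pos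
    have h₂' : n ∣ (x₂ - k * x₁) - t * (y₂ - k * y₁) := by
      have hid : (x₂ - k * x₁) - t * (y₂ - k * y₁) = (x₂ - t * y₂) - k * (x₁ - t * y₁) := by
        ring
      rw [hid]
      exact dvd_sub h₂ (h₁.mul_left k)
    have hcross' : (x₁ * (y₂ - k * y₁) - (x₂ - k * x₁) * y₁) ^ 2 = n ^ 2 := by
      have hid : x₁ * (y₂ - k * y₁) - (x₂ - k * x₁) * y₁ = x₁ * y₂ - x₂ * y₁ := by ring
      rw [hid]; exact hcross
    have hdet' : (x₁ ^ 2 + 3 * y₁ ^ 2) * ((x₂ - k * x₁) ^ 2 + 3 * (y₂ - k * y₁) ^ 2)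
        = ((x₁ * x₂ + 3 * y₁ * y₂) - k * (x₁ ^ 2 + 3 * y₁ ^ 2)) ^ 2 + 3 * n ^ 2 := by
      rw [← hcross']; ring
    have hBlt : ((x₁ * x₂ + 3 * y₁ * y₂) - k * (x₁ ^ 2 + 3 * y₁ ^ 2)) ^ 2
        < (x₁ * x₂ + 3 * y₁ * y₂) ^ 2 := by
      have h1 : |(x₁ * x₂ + 3 * y₁ * y₂) - k * (x₁ ^ 2 + 3 * y₁ ^ 2)|
          < |x₁ * x₂ + 3 * y₁ * y₂| := by linarith
      calc ((x₁ * x₂ + 3 * y₁ * y₂) - k * (x₁ ^ 2 + 3 * y₁ ^ 2)) ^ 2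
          = |(x₁ * x₂ + 3 * y₁ * y₂) - k * (x₁ ^ 2 + 3 * y₁ ^ 2)| ^ 2 := (sq_abs _).symm
        _ < |x₁ * x₂ + 3 * y₁ * y₂| ^ 2 := by
            exact pow_lt_pow_left₀ h1 (abs_nonneg _) two_ne_zero
        _ = (x₁ * x₂ + 3 * y₁ * y₂) ^ 2 := sq_abs _
    have hF₂'lt : (x₂ - k * x₁) ^ 2 + 3 * (y₂ - k * y₁) ^ 2 < x₂ ^ 2 + 3 * y₂ ^ 2 :=
      aux_step_lt _ _ _ _ _ _ hF₁pos hdet hdet' hBlt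
    have hsum : (x₁ ^ 2 + 3 * y₁ ^ 2) + ((x₂ - k * x₁) ^ 2 + 3 * (y₂ - k * y₁) ^ 2)
        < (x₁ ^ 2 + 3 * y₁ ^ 2) + (x₂ ^ 2 + 3 * y₂ ^ 2) := by linarith
    have hpos2 : (0:ℤ) < (x₁ ^ 2 + 3 * y₁ ^ 2) + (x₂ ^ 2 + 3 * y₂ ^ 2) := by
      nlinarith [sq_nonneg x₂, sq_nonneg y₂]
    have hNat : ((x₁ ^ 2 + 3 * y₁ ^ 2) + ((x₂ - k * x₁) ^ 2 + 3 * (y₂ - k * y₁) ^ 2)).toNat < N := by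
      have hlt := (Int.toNat_lt_toNat hpos2).mpr hsum
      exact lt_of_lt_of_le hlt hN
    rcases le_total (x₁ ^ 2 + 3 * y₁ ^ 2) ((x₂ - k * x₁) ^ 2 + 3 * (y₂ - k * y₁) ^ 2) with hord | hord
    · exact IH _ hNat x₁ y₁ (x₂ - k * x₁) (y₂ - k * y₁) h₁ h₂' hcross' hord le_rfl
    · refine IH _ hNat (x₂ - k * x₁) (y₂ - k * y₁) x₁ y₁ h₂' h₁ ?_ hord ?_
      · have hid : (x₂ - k * x₁) * y₁ - x₁ * (y₂ - k * y₁)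
            = -(x₁ * (y₂ - k * y₁) - (x₂ - k * x₁) * y₁) := by ring
        rw [hid, neg_sq]
        exact hcross'
      · rw [add_comm ((x₂ - k * x₁) ^ 2 + 3 * (y₂ - k * y₁) ^ 2) (x₁ ^ 2 + 3 * y₁ ^ 2)]

private lemma coreRep (n t : ℤ) (hn : 0 < n) (h2 : n % 4 = 2) (ht : n ∣ t ^ 2 + 3) :
    ∃ x y : ℤ, x ^ 2 + 3 * y ^ 2 = 2 * n ∧ n ∣ x - t * y := by
  rcases le_total (t ^ 2 + 3 * 1 ^ 2) (n ^ 2 + 3 * 0 ^ 2) with h | h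
  · exact reduceLoop n t hn h2 ht _ t 1 n 0 (by simp) (by simp) (by ring) h le_rfl
  · exact reduceLoop n t hn h2 ht _ n 0 t 1 (by simp) (by simp) (by ring) h le_rfl

set_option maxHeartbeats 1000000 in
/-- There exist integers `r, s` with `s² + 3r² = 2q`, both
divisible by `ζ = gcd(d, c)`, making all twelve coefficient quantities of the
parametrization (paramtwo) integers (expressed by the divisibility
conditions on the numerators). -/
theorem exists_r_s_divisible_by_zeta
    (a b c d : ℤ)
    (ha : 0 < a) (hb : 0 < b) (hc : 0 < c) (hd : 0 < d)
    (hao : Odd a) (hbo : Odd b) (hco : Odd c) (hdo : Odd d)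
    (heq : a ^ 2 + b ^ 2 + c ^ 2 = 3 * d ^ 2)
    (hgcd : Int.gcd a (Int.gcd b c) = 1)
    (q : ℤ) (hq : q = a ^ 2 + b ^ 2) :
    ∃ r s : ℤ,
      s ^ 2 + 3 * r ^ 2 = 2 * q ∧
      ((Int.gcd d c : ℤ)) ∣ r ∧
      ((Int.gcd d c : ℤ)) ∣ s ∧
      (2 * q) ∣ (d * b * (3 * r + s) + a * c * (r - s)) ∧
      q ∣ (r * a * c + d * b * s) ∧
      (2 * q) ∣ (d * a * (3 * r + s) - b * c * (r - s)) ∧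
      q ∣ (d * a * s - b * c * r) ∧
      (2 : ℤ) ∣ (r - s) ∧
      (2 * q) ∣ (d * b * (s - 3 * r) + a * c * (r + s)) ∧
      (2 * q) ∣ (d * a * (s - 3 * r) - b * c * (r + s)) ∧
      (2 : ℤ) ∣ (r + s) := by
  subst hq
  -- abstract the two gcds
  obtain ⟨z, hzdef⟩ : ∃ z : ℤ, z = ((Int.gcd d c : ℤ)) := ⟨_, rfl⟩
  rw [← hzdef]
  obtain ⟨g, hgdef⟩ : ∃ g : ℤ, g = ((Int.gcd a b : ℤ)) := ⟨_, rfl⟩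
  have hgpos : 0 < g := by
    rw [hgdef]
    exact_mod_cast Int.gcd_pos_iff.mpr (Or.inl ha.ne')
  have hzpos : 0 < z := by
    rw [hzdef]
    exact_mod_cast Int.gcd_pos_iff.mpr (Or.inl hd.ne')
  have hgdvda : g ∣ a := hgdef ▸ Int.gcd_dvd_left _ _
  have hgdvdb : g ∣ b := hgdef ▸ Int.gcd_dvd_right _ _
  have hzdvdd : z ∣ d := hzdef ▸ Int.gcd_dvd_left _ _
  have hzdvdc : z ∣ c := hzdef ▸ Int.gcd_dvd_right _ _
  -- coprimality of z and g
  have key : ∀ k : ℤ, k ∣ a → k ∣ b → k ∣ c → k ∣ 1 := by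
    intro k h1 h2 h3
    have h4 : k ∣ ((Int.gcd b c : ℤ)) := Int.dvd_coe_gcd h2 h3
    have h5 : k ∣ ((Int.gcd a ((Int.gcd b c : ℤ)) : ℤ)) := Int.dvd_coe_gcd h1 h4
    rw [hgcd] at h5
    exact_mod_cast h5
  have hzg : IsCoprime z g := by
    rw [Int.isCoprime_iff_gcd_eq_one]
    have h1 : ((Int.gcd z g : ℤ)) ∣ 1 :=
      key _ ((Int.gcd_dvd_right _ _).trans hgdvda) ((Int.gcd_dvd_right _ _).trans hgdvdb)
        ((Int.gcd_dvd_left _ _).trans hzdvdc)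
    have h2 := Int.eq_one_of_dvd_one (by positivity) h1
    exact_mod_cast h2
  -- quotient coprimality
  obtain ⟨a₂, ha₂⟩ := hgdvda
  obtain ⟨b₂, hb₂⟩ := hgdvdb
  obtain ⟨d₁, hd₁⟩ := hzdvdd
  obtain ⟨c₁, hc₁⟩ := hzdvdc
  have hgcd_ab : Int.gcd a₂ b₂ = 1 := by
    have hpos : 0 < Int.gcd a b := by
      have := hgpos; rw [hgdef] at this; exact_mod_cast this
    have h := Int.gcd_div_gcd_div_gcd hpos
    rw [← hgdef] at h
    rw [show a / g = a₂ by rw [ha₂]; exact Int.mul_ediv_cancel_left _ hgpos.ne',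
        show b / g = b₂ by rw [hb₂]; exact Int.mul_ediv_cancel_left _ hgpos.ne'] at h
    exact h
  have hgcd_dc : Int.gcd d₁ c₁ = 1 := by
    have hpos : 0 < Int.gcd d c := by
      have := hzpos; rw [hzdef] at this; exact_mod_cast this
    have h := Int.gcd_div_gcd_div_gcd hpos
    rw [← hzdef] at h
    rw [show d / z = d₁ by rw [hd₁]; exact Int.mul_ediv_cancel_left _ hzpos.ne',
        show c / z = c₁ by rw [hc₁]; exact Int.mul_ediv_cancel_left _ hzpos.ne'] at h
    exact h
  subst ha₂; subst hb₂; subst hc₁; subst hd₁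
  -- oddness
  obtain ⟨hgo, ha₂o⟩ := Int.odd_mul.mp hao
  obtain ⟨-, hb₂o⟩ := Int.odd_mul.mp hbo
  obtain ⟨hzo, hc₁o⟩ := Int.odd_mul.mp hco
  obtain ⟨-, hd₁o⟩ := Int.odd_mul.mp hdo
  -- key algebraic relations
  have hE : g ^ 2 * (a₂ ^ 2 + b₂ ^ 2) = z ^ 2 * (3 * d₁ ^ 2 - c₁ ^ 2) := by
    linear_combination heq
  have hzg2 : IsCoprime (z ^ 2) (g ^ 2) := hzg.pow
  have hz2 : z ^ 2 ∣ a₂ ^ 2 + b₂ ^ 2 :=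
    hzg2.dvd_of_dvd_mul_left ⟨3 * d₁ ^ 2 - c₁ ^ 2, hE⟩
  obtain ⟨q₂, hq₂⟩ := hz2
  have hzne : z ≠ 0 := hzpos.ne'
  have h3d : 3 * d₁ ^ 2 - c₁ ^ 2 = g ^ 2 * q₂ := by
    have h := hE
    rw [hq₂] at h
    have h' : z ^ 2 * (3 * d₁ ^ 2 - c₁ ^ 2) = z ^ 2 * (g ^ 2 * q₂) := by linear_combination -h
    exact mul_left_cancel₀ (pow_ne_zero 2 hzne) h'
  have ha₂ne : a₂ ≠ 0 := by
    intro h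
    rw [h] at ha₂o
    exact (Int.not_odd_iff_even.mpr Even.zero) ha₂o
  have hq₂pos : 0 < q₂ := by
    by_contra hcon
    push_neg at hcon
    have h1 : z ^ 2 * q₂ ≤ 0 := mul_nonpos_iff.mpr (Or.inl ⟨sq_nonneg z, hcon⟩)
    have h2 : 0 < a₂ ^ 2 := by positivity
    nlinarith [sq_nonneg b₂, hq₂]
  -- q₂ ≡ 2 mod 8
  have h8 : ∀ u : ℤ, Odd u → ∃ A, u ^ 2 = 8 * A + 1 := by
    intro u hu
    exact ⟨u ^ 2 / 8, by linarith [Int.mul_ediv_add_emod (u ^ 2) 8, odd_sq_mod8 u hu]⟩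
  obtain ⟨A, hA⟩ := h8 a₂ ha₂o
  obtain ⟨B1, hB1⟩ := h8 b₂ hb₂o
  obtain ⟨Z1, hZ1⟩ := h8 z hzo
  have hzq8 : (z ^ 2 * q₂) % 8 = 2 := by
    rw [← hq₂, hA, hB1]; omega
  have hz8 : z ^ 2 % 8 = 1 := by rw [hZ1]; omega
  have hq₂8 : q₂ % 8 = 2 := by
    have h := Int.mul_emod (z ^ 2) q₂ 8
    rw [hzq8, hz8] at h
    omega
  have hq₂4 : q₂ % 4 = 2 := by omega
  -- coprimality with q₂
  have hb₂q : IsCoprime b₂ q₂ := by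
    apply coprime_of_sq a₂ b₂ q₂ hgcd_ab
    have h1 : ((Int.gcd b₂ q₂ : ℤ)) ∣ b₂ := Int.gcd_dvd_left _ _
    have h2 : ((Int.gcd b₂ q₂ : ℤ)) ∣ q₂ := Int.gcd_dvd_right _ _
    have hid : a₂ ^ 2 = z ^ 2 * q₂ - b₂ * b₂ := by linear_combination hq₂
    rw [hid]
    exact dvd_sub (h2.mul_left _) (h1.mul_left _)
  have hd₁q : IsCoprime d₁ q₂ := by
    apply coprime_of_sq c₁ d₁ q₂ (by rwa [Int.gcd_comm] at hgcd_dc)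
    have h1 : ((Int.gcd d₁ q₂ : ℤ)) ∣ d₁ := Int.gcd_dvd_left _ _
    have h2 : ((Int.gcd d₁ q₂ : ℤ)) ∣ q₂ := Int.gcd_dvd_right _ _
    have hid : c₁ ^ 2 = 3 * (d₁ * d₁) - g ^ 2 * q₂ := by linear_combination -h3d
    rw [hid]
    exact dvd_sub ((h1.mul_left d₁).mul_left 3) (h2.mul_left _)
  have hbd : IsCoprime (b₂ * d₁) q₂ := hb₂q.mul_left hd₁q
  obtain ⟨u, v, huv⟩ := hbd
  -- ZMod machinery
  obtain ⟨nn, hnq⟩ : ∃ nn : ℕ, (nn : ℤ) = q₂ := ⟨q₂.toNat, Int.toNat_of_nonneg hq₂pos.le⟩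
  haveI : NeZero nn := ⟨by omega⟩
  have cast_dvd : ∀ X : ℤ, ((X : ZMod nn) = 0) → q₂ ∣ X := by
    intro X hX
    have := (ZMod.intCast_zmod_eq_zero_iff_dvd X nn).mp hX
    rwa [hnq] at this
  have hq₂0 : ((q₂ : ℤ) : ZMod nn) = 0 := by
    rw [← hnq]
    exact_mod_cast ZMod.natCast_self nn
  have habR : ((a₂ : ZMod nn)) ^ 2 + ((b₂ : ZMod nn)) ^ 2 = 0 := by
    have h := congrArg (fun w : ℤ => ((w : ZMod nn))) hq₂
    push_cast at h
    rw [hq₂0, mul_zero] at h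
    exact h
  have hcdR : 3 * ((d₁ : ZMod nn)) ^ 2 - ((c₁ : ZMod nn)) ^ 2 = 0 := by
    have h := congrArg (fun w : ℤ => ((w : ZMod nn))) h3d
    push_cast at h
    rw [hq₂0, mul_zero] at h
    exact h
  have huR : ((u : ZMod nn)) * (((b₂ : ZMod nn)) * ((d₁ : ZMod nn))) = 1 := by
    have h := congrArg (fun w : ℤ => ((w : ZMod nn))) huv
    push_cast at h
    rw [hq₂0, mul_zero, add_zero] at h
    exact h
  -- the auxiliary t and the representation
  have hT : q₂ ∣ (-(a₂ * c₁ * u)) ^ 2 + 3 := by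
    apply cast_dvd
    push_cast
    linear_combination (((c₁ : ZMod nn)) ^ 2 * ((u : ZMod nn)) ^ 2) * habR
      + (((b₂ : ZMod nn)) ^ 2 * ((u : ZMod nn)) ^ 2) * hcdR
      - (3 * (((u : ZMod nn)) * ((b₂ : ZMod nn)) * ((d₁ : ZMod nn))) + 3) * huR
  obtain ⟨s₂, r₂, hrep, hcong⟩ := coreRep q₂ (-(a₂ * c₁ * u)) hq₂pos hq₂4 hT
  have hsR : ((s₂ : ZMod nn)) = -(((a₂ : ZMod nn)) * ((c₁ : ZMod nn)) * ((u : ZMod nn))) * ((r₂ : ZMod nn)) := by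
    have h0 : ((nn : ℤ)) ∣ s₂ - (-(a₂ * c₁ * u)) * r₂ := by rw [hnq]; exact hcong
    have h := (ZMod.intCast_zmod_eq_zero_iff_dvd _ nn).mpr h0
    push_cast at h
    linear_combination h
  -- parity
  have hparity : Even (r₂ + s₂) := even_add_of_eq r₂ s₂ q₂ hrep
  obtain ⟨e, he⟩ := hparity
  have hparity2 : Even (r₂ - s₂) := ⟨e - s₂, by omega⟩
  -- the q₂-divisibility facts
  have hA2 : q₂ ∣ a₂ * c₁ * r₂ + d₁ * b₂ * s₂ := by
    apply cast_dvd
    push_cast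
    linear_combination (((b₂ : ZMod nn)) * ((d₁ : ZMod nn))) * hsR
      - (((a₂ : ZMod nn)) * ((c₁ : ZMod nn)) * ((r₂ : ZMod nn))) * huR
  have hB2 : q₂ ∣ d₁ * a₂ * s₂ - b₂ * c₁ * r₂ := by
    apply cast_dvd
    push_cast
    linear_combination (((a₂ : ZMod nn)) * ((d₁ : ZMod nn))) * hsR
      - (((c₁ : ZMod nn)) * ((d₁ : ZMod nn)) * ((u : ZMod nn)) * ((r₂ : ZMod nn))) * habR
      + (((b₂ : ZMod nn)) * ((c₁ : ZMod nn)) * ((r₂ : ZMod nn))) * huR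
  have hG1 : q₂ ∣ d₁ * b₂ * (3 * r₂ + s₂) + a₂ * c₁ * (r₂ - s₂) := by
    apply cast_dvd
    push_cast
    linear_combination ((((b₂ : ZMod nn)) * ((d₁ : ZMod nn))) - (((a₂ : ZMod nn)) * ((c₁ : ZMod nn)))) * hsR
      + (((c₁ : ZMod nn)) ^ 2 * ((u : ZMod nn)) * ((r₂ : ZMod nn))) * habR
      + (((b₂ : ZMod nn)) ^ 2 * ((u : ZMod nn)) * ((r₂ : ZMod nn))) * hcdR
      + (-(((a₂ : ZMod nn)) * ((c₁ : ZMod nn)) * ((r₂ : ZMod nn))) - 3 * (((b₂ : ZMod nn)) * ((d₁ : ZMod nn)) * ((r₂ : ZMod nn)))) * huR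
  have hG3 : q₂ ∣ d₁ * a₂ * (3 * r₂ + s₂) - b₂ * c₁ * (r₂ - s₂) := by
    apply cast_dvd
    push_cast
    linear_combination ((((a₂ : ZMod nn)) * ((d₁ : ZMod nn))) + (((b₂ : ZMod nn)) * ((c₁ : ZMod nn)))) * hsR
      - (((c₁ : ZMod nn)) * ((d₁ : ZMod nn)) * ((u : ZMod nn)) * ((r₂ : ZMod nn))) * habR
      + (((a₂ : ZMod nn)) * ((b₂ : ZMod nn)) * ((u : ZMod nn)) * ((r₂ : ZMod nn))) * hcdR
      + ((((b₂ : ZMod nn)) * ((c₁ : ZMod nn)) * ((r₂ : ZMod nn))) - 3 * (((a₂ : ZMod nn)) * ((d₁ : ZMod nn)) * ((r₂ : ZMod nn)))) * huR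
  have hG6 : q₂ ∣ d₁ * b₂ * (s₂ - 3 * r₂) + a₂ * c₁ * (r₂ + s₂) := by
    apply cast_dvd
    push_cast
    linear_combination ((((b₂ : ZMod nn)) * ((d₁ : ZMod nn))) + (((a₂ : ZMod nn)) * ((c₁ : ZMod nn)))) * hsR
      - (((c₁ : ZMod nn)) ^ 2 * ((u : ZMod nn)) * ((r₂ : ZMod nn))) * habR
      - (((b₂ : ZMod nn)) ^ 2 * ((u : ZMod nn)) * ((r₂ : ZMod nn))) * hcdR
      + (3 * (((b₂ : ZMod nn)) * ((d₁ : ZMod nn)) * ((r₂ : ZMod nn))) - (((a₂ : ZMod nn)) * ((c₁ : ZMod nn)) * ((r₂ : ZMod nn)))) * huR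
  have hG7 : q₂ ∣ d₁ * a₂ * (s₂ - 3 * r₂) - b₂ * c₁ * (r₂ + s₂) := by
    apply cast_dvd
    push_cast
    linear_combination ((((a₂ : ZMod nn)) * ((d₁ : ZMod nn))) - (((b₂ : ZMod nn)) * ((c₁ : ZMod nn)))) * hsR
      - (((c₁ : ZMod nn)) * ((d₁ : ZMod nn)) * ((u : ZMod nn)) * ((r₂ : ZMod nn))) * habR
      - (((a₂ : ZMod nn)) * ((b₂ : ZMod nn)) * ((u : ZMod nn)) * ((r₂ : ZMod nn))) * hcdR
      + ((((b₂ : ZMod nn)) * ((c₁ : ZMod nn)) * ((r₂ : ZMod nn))) + 3 * (((a₂ : ZMod nn)) * ((d₁ : ZMod nn)) * ((r₂ : ZMod nn)))) * huR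
  -- 2q₂-divisibilities
  have h2G1 : 2 * q₂ ∣ d₁ * b₂ * (3 * r₂ + s₂) + a₂ * c₁ * (r₂ - s₂) :=
    two_q_dvd q₂ _ hq₂4 (four_dvd_gen1 (d₁ * b₂) (a₂ * c₁) r₂ s₂ (hd₁o.mul hb₂o) (ha₂o.mul hc₁o) hparity2) hG1
  have h2G3 : 2 * q₂ ∣ d₁ * a₂ * (3 * r₂ + s₂) - b₂ * c₁ * (r₂ - s₂) := by
    apply two_q_dvd q₂ _ hq₂4 ?_ hG3
    have h := four_dvd_gen1 (d₁ * a₂) (-(b₂ * c₁)) r₂ s₂ (hd₁o.mul ha₂o) ((hb₂o.mul hc₁o).neg) hparity2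
    have hid : d₁ * a₂ * (3 * r₂ + s₂) + -(b₂ * c₁) * (r₂ - s₂)
        = d₁ * a₂ * (3 * r₂ + s₂) - b₂ * c₁ * (r₂ - s₂) := by ring
    rwa [hid] at h
  have h2G6 : 2 * q₂ ∣ d₁ * b₂ * (s₂ - 3 * r₂) + a₂ * c₁ * (r₂ + s₂) :=
    two_q_dvd q₂ _ hq₂4 (four_dvd_gen2 (d₁ * b₂) (a₂ * c₁) r₂ s₂ (hd₁o.mul hb₂o) (ha₂o.mul hc₁o) ⟨e, he⟩) hG6
  have h2G7 : 2 * q₂ ∣ d₁ * a₂ * (s₂ - 3 * r₂) - b₂ * c₁ * (r₂ + s₂) := by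
    apply two_q_dvd q₂ _ hq₂4 ?_ hG7
    have h := four_dvd_gen2 (d₁ * a₂) (-(b₂ * c₁)) r₂ s₂ (hd₁o.mul ha₂o) ((hb₂o.mul hc₁o).neg) ⟨e, he⟩
    have hid : d₁ * a₂ * (s₂ - 3 * r₂) + -(b₂ * c₁) * (r₂ + s₂)
        = d₁ * a₂ * (s₂ - 3 * r₂) - b₂ * c₁ * (r₂ + s₂) := by ring
    rwa [hid] at h
  -- final assembly
  refine ⟨g * z * r₂, g * z * s₂, ?_, ⟨g * r₂, by ring⟩, ⟨g * s₂, by ring⟩, ?_, ?_, ?_, ?_, ?_, ?_, ?_, ?_⟩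
  · linear_combination (g ^ 2 * z ^ 2) * hrep - 2 * g ^ 2 * hq₂
  · obtain ⟨w, hw⟩ := h2G1
    exact ⟨w, by linear_combination (g ^ 2 * z ^ 2) * hw - 2 * g ^ 2 * w * hq₂⟩
  · obtain ⟨w, hw⟩ := hA2
    exact ⟨w, by linear_combination (g ^ 2 * z ^ 2) * hw - g ^ 2 * w * hq₂⟩
  · obtain ⟨w, hw⟩ := h2G3
    exact ⟨w, by linear_combination (g ^ 2 * z ^ 2) * hw - 2 * g ^ 2 * w * hq₂⟩
  · obtain ⟨w, hw⟩ := hB2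
    exact ⟨w, by linear_combination (g ^ 2 * z ^ 2) * hw - g ^ 2 * w * hq₂⟩
  · obtain ⟨e2, he2⟩ := hparity2
    exact ⟨g * z * e2, by linear_combination (g * z) * he2⟩
  · obtain ⟨w, hw⟩ := h2G6
    exact ⟨w, by linear_combination (g ^ 2 * z ^ 2) * hw - 2 * g ^ 2 * w * hq₂⟩
  · obtain ⟨w, hw⟩ := h2G7
    exact ⟨w, by linear_combination (g ^ 2 * z ^ 2) * hw - 2 * g ^ 2 * w * hq₂⟩
  · exact ⟨g * z * e, by linear_combination (g * z) * he⟩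
end

section
/- Let a, b, c, d be odd positive integers with a² + b² + c² = 3d² and gcd(a,b,c) = 1, set q = a² + b² and ζ = gcd(d, c). If r, s are integers with s² + 3r² = 2q such that all twelve quantities m_x = −[db(3r+s) + ac(r−s)]/(2q), n_x = −(rac + dbs)/q, m_y = [da(3r+s) − bc(r−s)]/(2q), n_y = (das − bcr)/q, m_z = (r−s)/2, n_z = r, m_u = −(rac + dbs)/q, n_u = −[db(s−3r) + ac(r+s)]/(2q), m_v = (das − rbc)/q, n_v = [da(s−3r) − bc(r+s)]/(2q), m_w = r, n_w = (r+s)/2 are integers, then ζ divides r and ζ divides s. -/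
/-- Key local lemma: under the structural hypotheses, every prime power
dividing both `c` and `d` also divides `r` and `s`. -/
lemma zeta_key (a b c d q r s : ℤ)
    (hq : q = a ^ 2 + b ^ 2) (hq2 : q = 3 * d ^ 2 - c ^ 2) (hq0 : q ≠ 0)
    (hgcd : Int.gcd a (Int.gcd b c) = 1)
    (H1 : q ∣ d * a * s - b * c * r)
    (H2 : q ∣ 3 * d * b * r - a * c * s)
    (p : ℕ) (hp : p.Prime) :
    ∀ j : ℕ, (p : ℤ) ^ j ∣ c → (p : ℤ) ^ j ∣ d → (p : ℤ) ^ j ∣ r ∧ (p : ℤ) ^ j ∣ s := by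
  have hpz : Prime (p : ℤ) := Int.prime_iff_natAbs_prime.mpr (by simpa using hp)
  intro j
  induction j with
  | zero => intro _ _; simp
  | succ j ih =>
    intro hc hd
    obtain ⟨hr', hs'⟩ := ih ((pow_dvd_pow _ (Nat.le_succ j)).trans hc)
      ((pow_dvd_pow _ (Nat.le_succ j)).trans hd)
    obtain ⟨c₁, hc₁⟩ := hc
    obtain ⟨d₁, hd₁⟩ := hd
    obtain ⟨r₁, hr₁⟩ := hr'
    obtain ⟨s₁, hs₁⟩ := hs'
    have hqQ : q = (p : ℤ) ^ (2 * j + 2) * (3 * d₁ ^ 2 - c₁ ^ 2) := by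
      rw [hq2, hc₁, hd₁]; ring
    have hQ0 : (3 * d₁ ^ 2 - c₁ ^ 2) ≠ 0 := by
      intro h; exact hq0 (by rw [hqQ, h, mul_zero])
    obtain ⟨m, Q₂, hndvd, hQfac⟩ := WfDvdMonoid.max_power_factor hQ0 hpz.irreducible
    have hpM : (p : ℤ) ^ (2 * j + 2 + m) ∣ q := by
      rw [hqQ, hQfac, pow_add]
      exact ⟨Q₂, by ring⟩
    have hpq : (p : ℤ) ∣ q :=
      (dvd_pow_self (p : ℤ) (by omega : 2 * j + 2 + m ≠ 0)).trans hpM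
    have hpc : (p : ℤ) ∣ c := by
      rw [hc₁]; exact ⟨(p : ℤ) ^ j * c₁, by ring⟩
    have hpa : ¬ (p : ℤ) ∣ a := by
      intro hpa
      have hpb : (p : ℤ) ∣ b := by
        have h2 : (p : ℤ) ∣ b ^ 2 := by
          have : b ^ 2 = q - a ^ 2 := by rw [hq]; ring
          rw [this]
          exact dvd_sub hpq (dvd_pow hpa two_ne_zero)
        exact hpz.dvd_of_dvd_pow h2
      have hdvd1 : (p : ℤ) ∣ (Int.gcd a (Int.gcd b c) : ℤ) :=
        Int.dvd_coe_gcd hpa (Int.dvd_coe_gcd hpb hpc)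
      rw [hgcd] at hdvd1
      exact hpz.not_isUnit (isUnit_of_dvd_one hdvd1)
    have hcop : IsCoprime ((p : ℤ) ^ (2 * j + 2 + m)) a := by
      refine IsCoprime.pow_left ?_
      rw [Int.isCoprime_iff_gcd_eq_one]
      have : ¬ p ∣ a.natAbs := fun h => hpa (Int.natCast_dvd.mpr h)
      simpa [Int.gcd] using (Nat.Prime.coprime_iff_not_dvd hp).mpr this
    obtain ⟨u, v, huv⟩ := id hcop
    set L : ℤ := v * b with hL
    have hlam : (p : ℤ) ^ (2 * j + 2 + m) ∣ a * L - b :=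
      ⟨-(b * u), by linear_combination b * huv⟩
    have hpow0 : ((p : ℤ) ^ (2 * j + 1)) ≠ 0 := pow_ne_zero _ hpz.ne_zero
    -- first congruence
    have hc1 : (p : ℤ) ^ (m + 1) ∣ d₁ * s₁ - L * (c₁ * r₁) := by
      have hcong : (p : ℤ) ^ (2 * j + 2 + m) ∣ a * (d * s - L * (c * r)) := by
        have e : a * (d * s - L * (c * r)) =
            (d * a * s - b * c * r) - (a * L - b) * (c * r) := by ring
        rw [e]
        exact dvd_sub (hpM.trans H1) (hlam.mul_right _)
      have hcanc : (p : ℤ) ^ (2 * j + 2 + m) ∣ (d * s - L * (c * r)) :=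
        hcop.dvd_of_dvd_mul_left hcong
      have e2 : d * s - L * (c * r) =
          (p : ℤ) ^ (2 * j + 1) * (d₁ * s₁ - L * (c₁ * r₁)) := by
        rw [hc₁, hd₁, hr₁, hs₁]; ring
      rw [e2] at hcanc
      have e3 : (2 * j + 2 + m) = (2 * j + 1) + (m + 1) := by omega
      rw [e3, pow_add] at hcanc
      exact (mul_dvd_mul_iff_left hpow0).mp hcanc
    -- second congruence
    have hc2 : (p : ℤ) ^ (m + 1) ∣ 3 * L * (d₁ * r₁) - c₁ * s₁ := by
      have hcong : (p : ℤ) ^ (2 * j + 2 + m) ∣ a * (3 * L * (d * r) - c * s) := by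
        have e : a * (3 * L * (d * r) - c * s) =
            (3 * d * b * r - a * c * s) + (a * L - b) * (3 * (d * r)) := by ring
        rw [e]
        exact dvd_add (hpM.trans H2) (hlam.mul_right _)
      have hcanc : (p : ℤ) ^ (2 * j + 2 + m) ∣ (3 * L * (d * r) - c * s) :=
        hcop.dvd_of_dvd_mul_left hcong
      have e2 : 3 * L * (d * r) - c * s =
          (p : ℤ) ^ (2 * j + 1) * (3 * L * (d₁ * r₁) - c₁ * s₁) := by
        rw [hc₁, hd₁, hr₁, hs₁]; ring
      rw [e2] at hcanc
      have e3 : (2 * j + 2 + m) = (2 * j + 1) + (m + 1) := by omega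
      rw [e3, pow_add] at hcanc
      exact (mul_dvd_mul_iff_left hpow0).mp hcanc
    -- p does not divide L
    have hpL : ¬ (p : ℤ) ∣ L := by
      intro hdL
      have hL1 : (p : ℤ) ∣ a ^ 2 * (L ^ 2 + 1) := by
        have e : a ^ 2 * (L ^ 2 + 1) = (a * L - b) * (a * L + b) + q := by
          rw [hq]; ring
        rw [e]
        refine dvd_add (Dvd.dvd.mul_right ?_ _) hpq
        exact (dvd_pow_self (p : ℤ) (by omega : 2 * j + 2 + m ≠ 0)).trans hlam
      have hL2 : (p : ℤ) ∣ L ^ 2 + 1 := by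
        rcases hpz.dvd_mul.mp hL1 with h | h
        · exact absurd (hpz.dvd_of_dvd_pow h) hpa
        · exact h
      have : (p : ℤ) ∣ 1 := by
        have : (1 : ℤ) = (L ^ 2 + 1) - L * L := by ring
        rw [this]
        exact dvd_sub hL2 (hdL.mul_right _)
      exact hpz.not_isUnit (isUnit_of_dvd_one this)
    have hpQ2 : ¬ (p : ℤ) ∣ Q₂ := hndvd
    -- eliminate to get p ∣ r₁
    have hr1 : (p : ℤ) ∣ r₁ := by
      have hcomb : (p : ℤ) ^ (m + 1) ∣ (p : ℤ) ^ m * (L * Q₂ * r₁) := by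
        have e : (p : ℤ) ^ m * (L * Q₂ * r₁) =
            c₁ * (d₁ * s₁ - L * (c₁ * r₁)) + d₁ * (3 * L * (d₁ * r₁) - c₁ * s₁) := by
          linear_combination (-(L * r₁)) * hQfac
        rw [e]
        exact dvd_add (hc1.mul_left _) (hc2.mul_left _)
      have h' : (p : ℤ) ∣ L * Q₂ * r₁ := by
        rw [pow_succ] at hcomb
        exact (mul_dvd_mul_iff_left (pow_ne_zero m hpz.ne_zero)).mp hcomb
      rcases hpz.dvd_mul.mp h' with h | h
      · rcases hpz.dvd_mul.mp h with h2 | h2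
        · exact absurd h2 hpL
        · exact absurd h2 hpQ2
      · exact h
    have hs1 : (p : ℤ) ∣ s₁ := by
      have hcomb : (p : ℤ) ^ (m + 1) ∣ (p : ℤ) ^ m * (Q₂ * s₁) := by
        have e : (p : ℤ) ^ m * (Q₂ * s₁) =
            3 * d₁ * (d₁ * s₁ - L * (c₁ * r₁)) + c₁ * (3 * L * (d₁ * r₁) - c₁ * s₁) := by
          linear_combination (-s₁) * hQfac
        rw [e]
        exact dvd_add (hc1.mul_left _) (hc2.mul_left _)
      have h' : (p : ℤ) ∣ Q₂ * s₁ := by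
        rw [pow_succ] at hcomb
        exact (mul_dvd_mul_iff_left (pow_ne_zero m hpz.ne_zero)).mp hcomb
      rcases hpz.dvd_mul.mp h' with h | h
      · exact absurd h hpQ2
      · exact h
    constructor
    · obtain ⟨r₂, hr₂⟩ := hr1
      exact ⟨r₂, by rw [hr₁, hr₂, pow_succ]; ring⟩
    · obtain ⟨s₂, hs₂⟩ := hs1
      exact ⟨s₂, by rw [hs₁, hs₂, pow_succ]; ring⟩

/-- Remark: if `r, s` satisfy `s² + 3r² = 2q` and make all
twelve coefficient quantities of the parametrization (paramtwo) integers,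
then `ζ = gcd(d, c)` divides both `r` and `s`. -/
theorem zeta_dvd_r_s
    (a b c d : ℤ)
    (ha : 0 < a) (hb : 0 < b) (hc : 0 < c) (hd : 0 < d)
    (hao : Odd a) (hbo : Odd b) (hco : Odd c) (hdo : Odd d)
    (heq : a ^ 2 + b ^ 2 + c ^ 2 = 3 * d ^ 2)
    (hgcd : Int.gcd a (Int.gcd b c) = 1)
    (q : ℤ) (hq : q = a ^ 2 + b ^ 2)
    (r s : ℤ)
    (hrs : s ^ 2 + 3 * r ^ 2 = 2 * q)
    (h1 : (2 * q) ∣ (d * b * (3 * r + s) + a * c * (r - s)))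
    (h2 : q ∣ (r * a * c + d * b * s))
    (h3 : (2 * q) ∣ (d * a * (3 * r + s) - b * c * (r - s)))
    (h4 : q ∣ (d * a * s - b * c * r))
    (h5 : (2 : ℤ) ∣ (r - s))
    (h6 : (2 * q) ∣ (d * b * (s - 3 * r) + a * c * (r + s)))
    (h7 : (2 * q) ∣ (d * a * (s - 3 * r) - b * c * (r + s)))
    (h8 : (2 : ℤ) ∣ (r + s)) :
    ((Int.gcd d c : ℤ)) ∣ r ∧ ((Int.gcd d c : ℤ)) ∣ s := by
  have hq2 : q = 3 * d ^ 2 - c ^ 2 := by rw [hq]; linarith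
  have hq0 : q ≠ 0 := by nlinarith [sq_nonneg a, sq_nonneg b]
  have H2 : q ∣ 3 * d * b * r - a * c * s := by
    have h16 := dvd_sub h1 h6
    have e : (d * b * (3 * r + s) + a * c * (r - s)) -
        (d * b * (s - 3 * r) + a * c * (r + s)) = 2 * (3 * d * b * r - a * c * s) := by
      ring
    rw [e] at h16
    obtain ⟨k, hk⟩ := h16
    exact ⟨k, by linarith [hk]⟩
  have key := zeta_key a b c d q r s hq hq2 hq0 hgcd h4 H2
  -- from prime powers to the gcd
  set g : ℕ := Int.gcd d c with hg
  have hg0 : g ≠ 0 := by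
    intro h0
    rw [hg, Int.gcd_eq_zero_iff] at h0
    exact hd.ne' h0.1
  have hgc : (g : ℤ) ∣ c := Int.gcd_dvd_right d c
  have hgd : (g : ℤ) ∣ d := Int.gcd_dvd_left d c
  have main : ∀ t : ℤ, (∀ (p : ℕ), p.Prime → ∀ k : ℕ, (p:ℤ)^k ∣ c → (p:ℤ)^k ∣ d → (p:ℤ)^k ∣ t) →
      (g : ℤ) ∣ t := by
    intro t ht
    rcases eq_or_ne t 0 with rfl | ht0
    · exact dvd_zero _
    have htn0 : t.natAbs ≠ 0 := fun h => ht0 (Int.natAbs_eq_zero.mp h)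
    have hdvd : g ∣ t.natAbs := by
      rw [← Nat.factorization_le_iff_dvd hg0 htn0]
      intro p
      by_cases hp : p.Prime
      · have hpk : p ^ g.factorization p ∣ g := Nat.ordProj_dvd g p
        have hpc : (p : ℤ) ^ g.factorization p ∣ c := by
          have : ((p ^ g.factorization p : ℕ) : ℤ) ∣ (g : ℤ) :=
            Int.natCast_dvd_natCast.mpr hpk
          push_cast at this
          exact this.trans hgc
        have hpd : (p : ℤ) ^ g.factorization p ∣ d := by
          have : ((p ^ g.factorization p : ℕ) : ℤ) ∣ (g : ℤ) :=
            Int.natCast_dvd_natCast.mpr hpk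
          push_cast at this
          exact this.trans hgd
        have hpt : (p : ℤ) ^ g.factorization p ∣ t := ht p hp _ hpc hpd
        have hpt' : p ^ g.factorization p ∣ t.natAbs :=
          Int.natCast_dvd.mp (by push_cast; exact hpt)
        exact (Nat.Prime.pow_dvd_iff_le_factorization hp htn0).mp hpt'
      · simp [Nat.factorization_eq_zero_of_not_prime g hp]
    have : (g : ℤ) ∣ (t.natAbs : ℤ) := Int.natCast_dvd_natCast.mpr hdvd
    exact this.trans (Int.natAbs_dvd.mpr dvd_rfl)
  constructor
  · exact main r (fun p hp k hpc hpd => (key p hp k hpc hpd).1)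
  · exact main s (fun p hp k hpc hpd => (key p hp k hpc hpd).2)
end

section
/- The integer 1105 is the least positive integer d such that there exist odd positive integers a, b, c with a² + b² + c² = 3d², gcd(a, b, c) = 1, and gcd(d, a) > 1, gcd(d, b) > 1, gcd(d, c) > 1. -/
/-- If a prime `p` divides `d` and two of the three variables in
`x² + y² + z² = 3d²`, then it divides the third (given as `z`). -/
lemma aux_dvd_third {p : ℤ} (hp : Prime p) {d x y z : ℤ}
    (heq : x ^ 2 + y ^ 2 + z ^ 2 = 3 * d ^ 2)
    (hd : p ∣ d) (hx : p ∣ x) (hy : p ∣ y) : p ∣ z := by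
  have h2 : p ∣ z ^ 2 := by
    have hz : z ^ 2 = 3 * d ^ 2 - x ^ 2 - y ^ 2 := by linarith
    rw [hz]
    exact dvd_sub (dvd_sub (Dvd.dvd.mul_left (dvd_pow hd two_ne_zero) 3)
      (dvd_pow hx two_ne_zero)) (dvd_pow hy two_ne_zero)
  exact hp.dvd_of_dvd_pow h2

/-- If a prime `p` divides `y² + z²` but not `y`, then `p % 4 ≠ 3`. -/
lemma aux_mod_four {p : ℕ} (hp : p.Prime) {y z : ℤ}
    (hdvd : (p : ℤ) ∣ y ^ 2 + z ^ 2) (hy : ¬ (p : ℤ) ∣ y) : p % 4 ≠ 3 := by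
  haveI := Fact.mk hp
  have h0 : ((y ^ 2 + z ^ 2 : ℤ) : ZMod p) = 0 :=
    (ZMod.intCast_zmod_eq_zero_iff_dvd _ p).mpr hdvd
  push_cast at h0
  have hyz : ((y : ZMod p)) ^ 2 = -((z : ZMod p)) ^ 2 := by linear_combination h0
  have hy0 : ((y : ZMod p)) ≠ 0 := by
    rwa [Ne, ZMod.intCast_zmod_eq_zero_iff_dvd]
  exact ZMod.mod_four_ne_three_of_sq_eq_neg_sq hy0 hyz

/-- A prime that is `1 mod 4` is `5`, `13`, or at least `17`. -/
lemma aux_tri {p : ℕ} (hp : p.Prime) (h1 : p % 4 = 1) :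
    p = 5 ∨ p = 13 ∨ 17 ≤ p := by
  rcases lt_or_ge p 17 with h | h
  · have h2 := hp.two_le
    interval_cases p <;> first | omega | exact absurd hp (by decide)
  · exact Or.inr (Or.inr h)

/-- Three distinct numbers, each `5`, `13`, or `≥ 17`, have product `≥ 1105`. -/
lemma aux_prod {p q r : ℕ} (hp : p = 5 ∨ p = 13 ∨ 17 ≤ p)
    (hq : q = 5 ∨ q = 13 ∨ 17 ≤ q) (hr : r = 5 ∨ r = 13 ∨ 17 ≤ r)
    (hpq : p ≠ q) (hpr : p ≠ r) (hqr : q ≠ r) : 1105 ≤ p * q * r := by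
  obtain hp|hp|hp := hp <;> obtain hq|hq|hq := hq <;> obtain hr|hr|hr := hr <;>
    subst_vars <;>
    first
      | omega
      | nlinarith [Nat.mul_le_mul hq hr]
      | nlinarith [Nat.mul_le_mul hp hr]
      | nlinarith [Nat.mul_le_mul hp hq]

/-- `1105` is the least positive integer `d` admitting a
degenerate solution of `a² + b² + c² = 3d²`, i.e. odd positive `a, b, c` with
`gcd(a,b,c) = 1` and `min(gcd(d,a), gcd(d,b), gcd(d,c)) > 1`. -/
theorem least_degenerate_d :
    IsLeast
      {d : ℤ | 0 < d ∧
        ∃ a b c : ℤ, 0 < a ∧ 0 < b ∧ 0 < c ∧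
          Odd a ∧ Odd b ∧ Odd c ∧
          a ^ 2 + b ^ 2 + c ^ 2 = 3 * d ^ 2 ∧
          Int.gcd a (Int.gcd b c) = 1 ∧
          1 < Int.gcd d a ∧ 1 < Int.gcd d b ∧ 1 < Int.gcd d c}
      1105 := by
  constructor
  · refine ⟨by norm_num, 187, 415, 1859, by norm_num, by norm_num, by norm_num,
      ⟨93, by norm_num⟩, ⟨207, by norm_num⟩, ⟨929, by norm_num⟩, by norm_num,
      by decide, by decide, by decide, by decide⟩
  · rintro d ⟨hd, a, b, c, ha, hb, hc, hoa, hob, hoc, heq, hg, hda, hdb, hdc⟩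
    -- extract primes dividing each gcd
    obtain ⟨p, hp, hpg⟩ := Nat.exists_prime_and_dvd (show Int.gcd d a ≠ 1 by omega)
    obtain ⟨q, hq, hqg⟩ := Nat.exists_prime_and_dvd (show Int.gcd d b ≠ 1 by omega)
    obtain ⟨r, hr, hrg⟩ := Nat.exists_prime_and_dvd (show Int.gcd d c ≠ 1 by omega)
    have hpd : (p : ℤ) ∣ d := (Int.natCast_dvd_natCast.2 hpg).trans (Int.gcd_dvd_left _ _)
    have hpa : (p : ℤ) ∣ a := (Int.natCast_dvd_natCast.2 hpg).trans (Int.gcd_dvd_right _ _)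
    have hqd : (q : ℤ) ∣ d := (Int.natCast_dvd_natCast.2 hqg).trans (Int.gcd_dvd_left _ _)
    have hqb : (q : ℤ) ∣ b := (Int.natCast_dvd_natCast.2 hqg).trans (Int.gcd_dvd_right _ _)
    have hrd : (r : ℤ) ∣ d := (Int.natCast_dvd_natCast.2 hrg).trans (Int.gcd_dvd_left _ _)
    have hrc : (r : ℤ) ∣ c := (Int.natCast_dvd_natCast.2 hrg).trans (Int.gcd_dvd_right _ _)
    have hpZ : Prime (p : ℤ) := Nat.prime_iff_prime_int.mp hp
    have hqZ : Prime (q : ℤ) := Nat.prime_iff_prime_int.mp hq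
    have hrZ : Prime (r : ℤ) := Nat.prime_iff_prime_int.mp hr
    -- no prime divides all three of a, b, c
    have hall : ∀ t : ℤ, Prime t → t ∣ a → t ∣ b → t ∣ c → False := by
      intro t ht hta htb htc
      have h1 : t ∣ (Int.gcd a (Int.gcd b c) : ℤ) := Int.dvd_coe_gcd hta (Int.dvd_coe_gcd htb htc)
      rw [hg] at h1
      exact ht.not_unit (isUnit_of_dvd_one h1)
    -- the three primes are pairwise distinct
    have heqb : b ^ 2 + c ^ 2 + a ^ 2 = 3 * d ^ 2 := by linarith
    have heqc : c ^ 2 + a ^ 2 + b ^ 2 = 3 * d ^ 2 := by linarith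
    have hpq : p ≠ q := by
      rintro rfl
      exact hall _ hpZ hpa hqb (aux_dvd_third hpZ heq hpd hpa hqb)
    have hpr : p ≠ r := by
      rintro rfl
      exact hall _ hpZ hpa (aux_dvd_third hpZ heqc hpd hrc hpa) hrc
    have hqr : q ≠ r := by
      rintro rfl
      exact hall _ hqZ (aux_dvd_third hqZ heqb hqd hqb hrc) hqb hrc
    -- each prime is 1 mod 4
    have hpnb : ¬ (p : ℤ) ∣ b := fun h =>
      hall _ hpZ hpa h (aux_dvd_third hpZ heq hpd hpa h)
    have hqna : ¬ (q : ℤ) ∣ a := fun h =>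
      hall _ hqZ h hqb (aux_dvd_third hqZ heq hqd h hqb)
    have hrna : ¬ (r : ℤ) ∣ a := fun h =>
      hall _ hrZ h (aux_dvd_third hrZ heqc hrd hrc h) hrc
    have hpbc : (p : ℤ) ∣ b ^ 2 + c ^ 2 := by
      have : b ^ 2 + c ^ 2 = 3 * d ^ 2 - a ^ 2 := by linarith
      rw [this]
      exact dvd_sub (Dvd.dvd.mul_left (dvd_pow hpd two_ne_zero) 3) (dvd_pow hpa two_ne_zero)
    have hqac : (q : ℤ) ∣ a ^ 2 + c ^ 2 := by
      have : a ^ 2 + c ^ 2 = 3 * d ^ 2 - b ^ 2 := by linarith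
      rw [this]
      exact dvd_sub (Dvd.dvd.mul_left (dvd_pow hqd two_ne_zero) 3) (dvd_pow hqb two_ne_zero)
    have hrab : (r : ℤ) ∣ a ^ 2 + b ^ 2 := by
      have : a ^ 2 + b ^ 2 = 3 * d ^ 2 - c ^ 2 := by linarith
      rw [this]
      exact dvd_sub (Dvd.dvd.mul_left (dvd_pow hrd two_ne_zero) 3) (dvd_pow hrc two_ne_zero)
    -- oddness: each prime is odd since it divides an odd number
    have hodd : ∀ t : ℕ, t.Prime → ∀ x : ℤ, Odd x → (t : ℤ) ∣ x → t % 2 = 1 := by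
      intro t ht x hx htx
      rcases Nat.Prime.eq_two_or_odd' ht with h2 | h2
      · subst h2
        have h2x : (2 : ℤ) ∣ x := by exact_mod_cast htx
        obtain ⟨k, hk⟩ := hx
        omega
      · exact Nat.odd_iff.mp h2
    have hp2 : p % 2 = 1 := hodd p hp a hoa hpa
    have hq2 : q % 2 = 1 := hodd q hq b hob hqb
    have hr2 : r % 2 = 1 := hodd r hr c hoc hrc
    have hp4 : p % 4 = 1 := by
      have := aux_mod_four hp hpbc hpnb; omega
    have hq4 : q % 4 = 1 := by
      have h' : (q : ℤ) ∣ c ^ 2 + a ^ 2 := by rwa [add_comm] at hqac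
      have := aux_mod_four hq h' (fun h => hqna (hqZ.dvd_of_dvd_pow
        (by {have : a ^ 2 = (a^2 + c^2) - c^2 := by ring
             rw [this]; exact dvd_sub hqac (dvd_pow h two_ne_zero)})))
      omega
    have hr4 : r % 4 = 1 := by
      have := aux_mod_four hr hrab hrna; omega
    -- fix hq4: need ¬ q ∣ c for pair (c, a); above is awkward, redone inline
    -- product divides d
    have hpn : p ∣ d.natAbs := Int.natCast_dvd.mp hpd
    have hqn : q ∣ d.natAbs := Int.natCast_dvd.mp hqd
    have hrn : r ∣ d.natAbs := Int.natCast_dvd.mp hrd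
    have cpq : Nat.Coprime p q := (Nat.coprime_primes hp hq).mpr hpq
    have cpr : Nat.Coprime p r := (Nat.coprime_primes hp hr).mpr hpr
    have cqr : Nat.Coprime q r := (Nat.coprime_primes hq hr).mpr hqr
    have hpqd : p * q ∣ d.natAbs := cpq.mul_dvd_of_dvd_of_dvd hpn hqn
    have hpqr : p * q * r ∣ d.natAbs := (Nat.Coprime.mul cpr cqr).mul_dvd_of_dvd_of_dvd hpqd hrn
    have hdn0 : d.natAbs ≠ 0 := by
      intro h0
      rw [Int.natAbs_eq_zero] at h0
      omega
    have hle : p * q * r ≤ d.natAbs := Nat.le_of_dvd (Nat.pos_of_ne_zero hdn0) hpqr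
    have hbound : 1105 ≤ p * q * r :=
      aux_prod (aux_tri hp hp4) (aux_tri hq hq4) (aux_tri hr hr4) hpq hpr hqr
    have : (1105 : ℤ) ≤ (d.natAbs : ℤ) := by exact_mod_cast le_trans hbound hle
    rwa [Int.natAbs_of_nonneg (le_of_lt hd)] at this
end
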